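/- arXiv:2001.09470 — 4 statements merged into one kernel-verified Lean document; each statement's English description precedes it below -/
import Mathlib

section
/- Let H(z) := E_z[Σ_{i=1}^{τ⁺} h(Y_i)]. For every y ∈ ℝ and every level w ≥ y such that τ_w < ∞ holds P_y-almost surely and E_y[Σ_{i=1}^{τ_w} h(Y_i)] < ∞, the total running cost up to τ_w decomposes along the ascending ladder epochs: Σ_{n=0}^∞ E_y[ H(Y_{σ_n}) · 1_{{σ_n < τ_w}} ] = E_y[ Σ_{i=1}^{τ_w} h(Y_i) ]. -/
open MeasureTheory ProbabilityTheory Filter Set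
open scoped ENNReal NNReal ENat

noncomputable section

namespace Stmt

/-- Trajectory space of the chain. -/
abbrev Traj : Type := ℕ → ℝ

/-- First entry time of the trajectory into `(x, ∞)` (infimum over `n ≥ 0`),
with value `⊤` if the level is never exceeded. -/
noncomputable def hitGT (x : ℝ) (ω : Traj) : ℕ∞ :=
  sInf ((fun n : ℕ => (n : ℕ∞)) '' {n : ℕ | x < ω n})

/-- First entry time of the trajectory into `[x, ∞)`. -/
noncomputable def hitGE (x : ℝ) (ω : Traj) : ℕ∞ :=
  sInf ((fun n : ℕ => (n : ℕ∞)) '' {n : ℕ | x ≤ ω n})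

/-- `τ⁺ = inf {n ≥ 1 : Y_n > Y_0}`. -/
noncomputable def tauPlus (ω : Traj) : ℕ∞ :=
  sInf ((fun n : ℕ => (n : ℕ∞)) '' {n : ℕ | 1 ≤ n ∧ ω 0 < ω n})

/-- Accumulated running costs `∑_{i=1}^{n} h (Y_i)`. -/
def costSum (h : ℝ → ℝ) (n : ℕ) (ω : Traj) : ℝ := ∑ i ∈ Finset.Icc 1 n, h (ω i)

/-- Pay-off when stopping at (deterministic) time `n`. -/
def payoffAt (γ h : ℝ → ℝ) (n : ℕ) (ω : Traj) : ℝ := γ (ω n) - costSum h n ω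

/-- Pay-off when stopping at the (finite) value of a random time `τ`. -/
def payoffStopped (γ h : ℝ → ℝ) (τ : Traj → ℕ∞) (ω : Traj) : ℝ :=
  payoffAt γ h (τ ω).toNat ω

/-- Pay-off of a possibly infinite random time, with the value `-∞` on `{τ = ∞}`. -/
def payoffE (γ h : ℝ → ℝ) (τ : Traj → ℕ∞) (ω : Traj) : EReal :=
  if τ ω = ⊤ then (⊥ : EReal) else ((payoffStopped γ h τ ω : ℝ) : EReal)

/-- Positive part of an extended real number, as an element of `ℝ≥0∞`. -/
noncomputable def epos (x : EReal) : ℝ≥0∞ :=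
  if x = ⊤ then ⊤ else ENNReal.ofReal x.toReal

/-- Expectation of an extended-real random variable (with the convention `∞ - ∞ = -∞`). -/
noncomputable def eexp (μ : Measure Traj) (Z : Traj → EReal) : EReal :=
  ((∫⁻ ω, epos (Z ω) ∂μ : ℝ≥0∞) : EReal) - ((∫⁻ ω, epos (-(Z ω)) ∂μ : ℝ≥0∞) : EReal)

/-- The natural filtration of the coordinate process. -/
noncomputable def natF : Filtration ℕ (inferInstance : MeasurableSpace Traj) :=
  Filtration.natural (fun n (ω : Traj) => ω n)
    (fun n => (measurable_pi_apply n).stronglyMeasurable)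

/-- `τ` is a (possibly infinite) stopping time of the natural filtration. -/
def IsStopTime (τ : Traj → ℕ∞) : Prop :=
  ∀ n : ℕ, MeasurableSet[natF n] {ω : Traj | τ ω ≤ (n : ℕ∞)}

/-- A time-homogeneous Markov family on the real line: the joint law `P y` of the chain
started in `y`, together with the (time-homogeneous) Markov property. -/
structure MarkovFamily where
  /-- `P y` is the law of the chain started at `y` (a kernel, so measurable in `y`). -/
  P : Kernel ℝ Traj
  isMarkov : IsMarkovKernel P
  start : ∀ y : ℝ, ∀ᵐ ω ∂(P y), ω 0 = y
  markov : ∀ (y : ℝ) (n : ℕ) (B : Set (Fin (n + 1) → ℝ)) (A : Set Traj),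
    MeasurableSet B → MeasurableSet A →
    P y ({ω : Traj | (fun i : Fin (n + 1) => ω i) ∈ B} ∩ {ω : Traj | (fun k => ω (n + k)) ∈ A})
      = ∫⁻ ω in {ω : Traj | (fun i : Fin (n + 1) => ω i) ∈ B}, P (ω n) A ∂(P y)

/-- `φ(y) = E_y[γ(Y_{τ⁺}) - ∑_{i=1}^{τ⁺} h(Y_i)]`. -/
noncomputable def phi (M : MarkovFamily) (γ h : ℝ → ℝ) (y : ℝ) : ℝ :=
  ∫ ω, payoffStopped γ h tauPlus ω ∂(M.P y)

/-- `g(y) = E_y[τ⁺]`. -/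
noncomputable def gfun (M : MarkovFamily) (y : ℝ) : ℝ :=
  ∫ ω, ((tauPlus ω).toNat : ℝ) ∂(M.P y)

/-- `f(y) = (φ(y) - γ(y))/E_y[τ⁺]`. -/
noncomputable def ffun (M : MarkovFamily) (γ h : ℝ → ℝ) (y : ℝ) : ℝ :=
  (phi M γ h y - γ y) / gfun M y

/-- Well-definedness of `φ`, `g` and `f`. -/
def WellDefined (M : MarkovFamily) (γ h : ℝ → ℝ) : Prop :=
  ∀ y : ℝ, (∀ᵐ ω ∂(M.P y), tauPlus ω ≠ ⊤) ∧
    Integrable (payoffStopped γ h tauPlus) (M.P y) ∧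
    Integrable (fun ω => ((tauPlus ω).toNat : ℝ)) (M.P y) ∧
    0 < gfun M y

/-- Assumption (Opt): `E_y[sup_n (γ(Y_n) - ∑_{i=1}^n h(Y_i))] < ∞` and
`γ(Y_n) - ∑_{i=1}^n h(Y_i) → -∞` a.s. -/
def OptAssumption (M : MarkovFamily) (γ h : ℝ → ℝ) : Prop :=
  ∀ y : ℝ,
    (∫⁻ ω, epos (⨆ n : ℕ, ((payoffAt γ h n ω : ℝ) : EReal)) ∂(M.P y)) < ⊤ ∧
    (∀ᵐ ω ∂(M.P y), Tendsto (fun n => payoffAt γ h n ω) atTop atBot)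

/-- Assumption (F) relative to the root `x̄`. -/
def FAssumption (M : MarkovFamily) (γ h : ℝ → ℝ) (xbar : ℝ) : Prop :=
  (∀ z : ℝ, z < xbar → 0 < ffun M γ h z) ∧
  (∀ z : ℝ, xbar < z → ffun M γ h z < 0) ∧
  AntitoneOn (ffun M γ h) (Set.Ici xbar)

/-- The ascending ladder epochs `σ_0 = 0`, `σ_{n+1} = inf {k > σ_n : Y_k > Y_{σ_n}}`. -/
noncomputable def ladder (ω : Traj) : ℕ → ℕ∞
  | 0 => 0
  | n + 1 =>
    if ladder ω n = ⊤ then ⊤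
    else sInf ((fun k : ℕ => (k : ℕ∞)) ''
      {k : ℕ | (ladder ω n).toNat < k ∧ ω ((ladder ω n).toNat) < ω k})

/-- The value function `V(y)`, a supremum over all stopping times of the natural
filtration, with the pay-off interpreted as `-∞` on `{τ = ∞}`. -/
noncomputable def V (M : MarkovFamily) (γ h : ℝ → ℝ) (y : ℝ) : EReal :=
  ⨆ τ : {τ : Traj → ℕ∞ // IsStopTime τ}, eexp (M.P y) (payoffE γ h τ.1)


/-- `∑_{i=1}^{τ} h(Y_i)` as an extended-real sum (counting all `i ≥ 1` when `τ = ∞`). -/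
noncomputable def costSumE (h : ℝ → ℝ) (τ : Traj → ℕ∞) (ω : Traj) : ℝ≥0∞ :=
  ∑' i : ℕ, if 1 ≤ i ∧ (i : ℕ∞) ≤ τ ω then ENNReal.ofReal (h (ω i)) else 0

/-- `H(z) = E_z[∑_{i=1}^{τ⁺} h(Y_i)]`. -/
noncomputable def HfunE (M : MarkovFamily) (h : ℝ → ℝ) (z : ℝ) : ℝ≥0∞ :=
  ∫⁻ ω, costSumE h tauPlus ω ∂(M.P z)

noncomputable def stime (S : Set ℕ) : ℕ∞ := sInf ((fun n : ℕ => (n : ℕ∞)) '' S)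

lemma stime_nonempty {S : Set ℕ} (h : S.Nonempty) : stime S = (sInf S : ℕ) := by
  refine le_antisymm (sInf_le ⟨_, Nat.sInf_mem h, rfl⟩) (le_sInf ?_)
  rintro x ⟨m, hm, rfl⟩
  simpa using (Nat.cast_le (α := ℕ∞)).2 (Nat.sInf_le hm)

lemma stime_empty : stime (∅ : Set ℕ) = ⊤ := by simp [stime]

lemma stime_le_of_mem {S : Set ℕ} {m : ℕ} (hm : m ∈ S) : stime S ≤ m := sInf_le ⟨m, hm, rfl⟩

lemma le_stime_iff {S : Set ℕ} {i : ℕ} : (i : ℕ∞) ≤ stime S ↔ ∀ m < i, m ∉ S := by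
  rcases S.eq_empty_or_nonempty with rfl | h
  · simp [stime_empty]
  · rw [stime_nonempty h, Nat.cast_le]
    constructor
    · intro hi m hm hmS; exact absurd (Nat.sInf_le hmS) (by omega)
    · intro H; by_contra hc; exact H _ (by omega) (Nat.sInf_mem h)

lemma lt_stime_iff {S : Set ℕ} {k : ℕ} : (k : ℕ∞) < stime S ↔ ∀ m ≤ k, m ∉ S := by
  have : ((k : ℕ∞) < stime S) ↔ ((k+1 : ℕ) : ℕ∞) ≤ stime S := by
    rw [Nat.cast_add, Nat.cast_one, ENat.add_one_le_iff (by simp)]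
  rw [this, le_stime_iff]
  constructor <;> intro H m hm <;> exact H m (by omega)

lemma stime_eq_coe_iff {S : Set ℕ} {k : ℕ} : stime S = k ↔ k ∈ S ∧ ∀ m < k, m ∉ S := by
  constructor
  · intro hk
    rcases S.eq_empty_or_nonempty with rfl | h
    · simp [stime_empty] at hk
    · rw [stime_nonempty h, Nat.cast_inj] at hk
      subst hk
      exact ⟨Nat.sInf_mem h, fun m hm hmS => absurd (Nat.sInf_le hmS) (by omega)⟩
  · rintro ⟨hk, hmin⟩
    have h : S.Nonempty := ⟨k, hk⟩
    rw [stime_nonempty h, Nat.cast_inj]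
    have := Nat.sInf_mem h
    have := Nat.sInf_le hk
    by_contra hc
    exact hmin _ (by omega) (Nat.sInf_mem h)

lemma stime_ne_top_iff {S : Set ℕ} : stime S ≠ ⊤ ↔ S.Nonempty := by
  rcases S.eq_empty_or_nonempty with rfl | h
  · simp [stime_empty]
  · simp [stime_nonempty h, h]

lemma hitGT_eq (x : ℝ) (ω : Traj) : hitGT x ω = stime {n | x < ω n} := rfl
lemma tauPlus_eq (ω : Traj) : tauPlus ω = stime {n | 1 ≤ n ∧ ω 0 < ω n} := rfl
lemma ladder_zero (ω : Traj) : ladder ω 0 = 0 := rfl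

lemma ladder_succ_of_coe {ω : Traj} {n m : ℕ} (hm : ladder ω n = m) :
    ladder ω (n+1) = stime {k | m < k ∧ ω m < ω k} := by
  rw [ladder, hm]
  simp [stime]

lemma ladder_succ_of_top {ω : Traj} {n : ℕ} (hm : ladder ω n = ⊤) :
    ladder ω (n+1) = ⊤ := by
  rw [ladder, hm]; simp

lemma ladder_lt_succ {ω : Traj} {n m : ℕ} (hm : ladder ω n = m) :
    (m : ℕ∞) < ladder ω (n+1) := by
  rw [ladder_succ_of_coe hm, lt_stime_iff]
  intro j hj ⟨hj2, _⟩; omega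

lemma ladder_mono (ω : Traj) : Monotone (ladder ω) := by
  apply monotone_nat_of_le_succ
  intro n
  rcases eq_or_ne (ladder ω n) ⊤ with h | h
  · simp [ladder_succ_of_top h, h]
  · obtain ⟨m, hm⟩ := WithTop.ne_top_iff_exists.mp h
    exact hm ▸ (ladder_lt_succ hm.symm).le

lemma le_ladder_self (ω : Traj) (n : ℕ) : (n : ℕ∞) ≤ ladder ω n := by
  induction n with
  | zero => simp
  | succ n ih =>
    rcases eq_or_ne (ladder ω n) ⊤ with h | h
    · simp [ladder_succ_of_top h]
    · obtain ⟨m, hm⟩ := WithTop.ne_top_iff_exists.mp h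
      have h1 : (m : ℕ∞) < ladder ω (n+1) := ladder_lt_succ hm.symm
      have h2 : (n : ℕ∞) ≤ (m:ℕ∞) := le_of_le_of_eq ih hm.symm
      have : (n : ℕ∞) < ladder ω (n+1) := lt_of_le_of_lt h2 h1
      exact Order.add_one_le_of_lt this

lemma ladder_congr {ω ω' : Traj} {k : ℕ} (hag : ∀ i ≤ k, ω i = ω' i) :
    ∀ n, ladder ω n = k → ladder ω' n = k := by
  intro n
  induction n generalizing k with
  | zero => intro h; rw [ladder_zero] at h ⊢; exact h
  | succ n ih =>
    intro h
    rcases eq_or_ne (ladder ω n) ⊤ with htop | hne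
    · rw [ladder_succ_of_top htop] at h; exact absurd h.symm (by simp)
    obtain ⟨m, hm⟩ := WithTop.ne_top_iff_exists.mp hne
    rw [ladder_succ_of_coe hm.symm, stime_eq_coe_iff] at h
    obtain ⟨⟨hmk, hwk⟩, hmin⟩ := h
    have hm' : ladder ω' n = m := ih (fun i hi => hag i (by omega)) hm.symm
    rw [ladder_succ_of_coe hm', stime_eq_coe_iff]
    refine ⟨⟨hmk, ?_⟩, ?_⟩
    · rw [← hag m (by omega), ← hag k le_rfl]; exact hwk
    · intro j hj ⟨hj1, hj2⟩
      exact hmin j hj ⟨hj1, by rwa [hag m (by omega), hag j (by omega)]⟩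

noncomputable def block (h : ℝ → ℝ) (n : ℕ) (ω : Traj) : ℝ≥0∞ :=
  ∑' i : ℕ, if ladder ω n < (i : ℕ∞) ∧ (i : ℕ∞) ≤ ladder ω (n+1) then ENNReal.ofReal (h (ω i)) else 0

lemma ladder_succ_le_hit {ω : Traj} {w : ℝ} (hfin : hitGT w ω ≠ ⊤) {n : ℕ}
    (h : ladder ω n < hitGT w ω) : ladder ω (n+1) ≤ hitGT w ω := by
  rw [hitGT_eq] at *
  have hS : {j : ℕ | w < ω j}.Nonempty := stime_ne_top_iff.mp hfin
  rw [stime_nonempty hS] at *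
  have hne : ladder ω n ≠ ⊤ := h.ne_top
  obtain ⟨m, hm⟩ := WithTop.ne_top_iff_exists.mp hne
  have hmN : m < sInf {j : ℕ | w < ω j} := by
    rw [← hm] at h; exact ENat.coe_lt_coe.mp h
  have hNmem : sInf {j : ℕ | w < ω j} ∈ {j : ℕ | w < ω j} := Nat.sInf_mem hS
  have hwm : ¬ w < ω m := fun hc =>
    absurd (Nat.sInf_le (show m ∈ {j : ℕ | w < ω j} from hc)) (by omega)
  rw [ladder_succ_of_coe hm.symm]
  exact stime_le_of_mem ⟨hmN, (not_lt.mp hwm).trans_lt hNmem⟩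

lemma ladder_exists_block {ω : Traj} {i : ℕ} (hi : 1 ≤ i) :
    ∃ n, ladder ω n < (i : ℕ∞) ∧ (i : ℕ∞) ≤ ladder ω (n+1) := by
  have hne : {n : ℕ | ¬ ladder ω n < (i : ℕ∞)}.Nonempty :=
    ⟨i, fun (hc : ladder ω i < (i : ℕ∞)) => absurd (le_ladder_self ω i) (not_le.mpr hc)⟩
  have hNmem := Nat.sInf_mem hne
  set N := sInf {n : ℕ | ¬ ladder ω n < (i : ℕ∞)} with hN
  have hN1 : 1 ≤ N := by
    rcases Nat.eq_zero_or_pos N with h0 | h1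
    · exfalso
      apply hNmem
      show ladder ω N < (i : ℕ∞)
      rw [h0, ladder_zero]
      exact lt_of_lt_of_le (by norm_num) (by exact_mod_cast hi : (1:ℕ∞) ≤ (i:ℕ∞))
    · exact h1
  refine ⟨N - 1, ?_, ?_⟩
  · by_contra hc
    have := Nat.sInf_le (show N - 1 ∈ {n : ℕ | ¬ ladder ω n < (i : ℕ∞)} from hc)
    omega
  · have hNN : N - 1 + 1 = N := by omega
    rw [hNN]
    exact not_lt.mp hNmem

lemma blocks_decompose {w : ℝ} (h : ℝ → ℝ) {ω : Traj} (hfin : hitGT w ω ≠ ⊤) :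
    ∑' n : ℕ, Set.indicator {ω' : Traj | ladder ω' n < hitGT w ω'} (block h n) ω
      = costSumE h (hitGT w) ω := by
  have hind : ∀ n : ℕ, Set.indicator {ω' : Traj | ladder ω' n < hitGT w ω'} (block h n) ω
      = ∑' i : ℕ, if ladder ω n < hitGT w ω ∧ ladder ω n < (i : ℕ∞) ∧ (i : ℕ∞) ≤ ladder ω (n+1)
          then ENNReal.ofReal (h (ω i)) else 0 := by
    intro n
    rw [Set.indicator_apply]
    by_cases hc : ladder ω n < hitGT w ω
    · simp only [Set.mem_setOf_eq, hc, if_true, block, true_and]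
    · simp only [Set.mem_setOf_eq, hc, if_false, false_and, if_false, tsum_zero]
  rw [tsum_congr hind, ENNReal.tsum_comm, costSumE]
  refine tsum_congr fun i => ?_
  by_cases hcase : 1 ≤ i ∧ (i : ℕ∞) ≤ hitGT w ω
  · obtain ⟨hi1, hitau⟩ := hcase
    obtain ⟨n, hn1, hn2⟩ := ladder_exists_block (ω := ω) hi1
    rw [tsum_eq_single n ?_]
    · have : ladder ω n < hitGT w ω := lt_of_lt_of_le hn1 hitau
      simp [this, hn1, hn2, hi1, hitau]
    · intro m hm
      rw [if_neg]
      rintro ⟨-, hm1, hm2⟩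
      rcases lt_or_gt_of_ne hm with hlt | hgt
      · have : ladder ω (m+1) ≤ ladder ω n := ladder_mono ω (by omega)
        exact absurd (hm2.trans this) (not_le.mpr hn1)
      · have : ladder ω (n+1) ≤ ladder ω m := ladder_mono ω (by omega)
        exact absurd (hn2.trans this) (not_le.mpr hm1)
  · rw [if_neg hcase, ENNReal.tsum_eq_zero]
    intro n
    rw [if_neg]
    rintro ⟨hntau, hn1, hn2⟩
    rcases not_and_or.mp hcase with hi0 | hitau
    · have : i = 0 := by omega
      subst this
      simpa using hn1
    · have hsucc : ladder ω (n+1) ≤ hitGT w ω := ladder_succ_le_hit hfin hntau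
      exact hitau (hn2.trans hsucc)

lemma mset_pair (m j : ℕ) : MeasurableSet {ω : Traj | m < j ∧ ω m < ω j} := by
  by_cases h : m < j
  · simp only [h, true_and]
    exact measurableSet_lt (measurable_pi_apply m) (measurable_pi_apply j)
  · simp only [h, false_and, Set.setOf_false]
    exact MeasurableSet.empty

lemma measurableSet_Lset (n k : ℕ) : MeasurableSet {ω : Traj | ladder ω n = (k : ℕ∞)} := by
  induction n generalizing k with
  | zero =>
    rcases Nat.eq_zero_or_pos k with rfl | hk
    · convert MeasurableSet.univ
      ext ω; simp [ladder_zero]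
    · convert MeasurableSet.empty
      ext ω; simp only [Set.mem_setOf_eq, ladder_zero, Set.mem_empty_iff_false, iff_false]
      intro hc
      have : (0:ℕ) = k := by exact_mod_cast hc
      omega
  | succ n ih =>
    have : {ω : Traj | ladder ω (n+1) = (k : ℕ∞)} =
        ⋃ m : ℕ, ({ω : Traj | ladder ω n = (m : ℕ∞)} ∩
          {ω : Traj | (m < k ∧ ω m < ω k) ∧ ∀ j < k, ¬ (m < j ∧ ω m < ω j)}) := by
      ext ω
      simp only [Set.mem_iUnion, Set.mem_inter_iff, Set.mem_setOf_eq]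
      constructor
      · intro hk
        have hne : ladder ω n ≠ ⊤ := fun htop => by
          rw [ladder_succ_of_top htop] at hk; exact (ENat.coe_ne_top k) hk.symm
        obtain ⟨m, hm⟩ := WithTop.ne_top_iff_exists.mp hne
        rw [ladder_succ_of_coe hm.symm, stime_eq_coe_iff] at hk
        exact ⟨m, hm.symm, hk.1, fun j hj => hk.2 j hj⟩
      · rintro ⟨m, hm, hmem, hmin⟩
        rw [ladder_succ_of_coe hm, stime_eq_coe_iff]
        exact ⟨hmem, hmin⟩
    rw [this]
    refine MeasurableSet.iUnion fun m => (ih m).inter ?_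
    rw [Set.setOf_and]
    refine MeasurableSet.inter (mset_pair m k) ?_
    have heq : {ω : Traj | ∀ j < k, ¬ (m < j ∧ ω m < ω j)} =
        ⋂ j ∈ Set.Iio k, {ω : Traj | m < j ∧ ω m < ω j}ᶜ := by
      ext ω; simp
    rw [heq]
    exact MeasurableSet.biInter (Set.to_countable _) fun j _ => (mset_pair m j).compl

lemma lt_hitGT_iff {w : ℝ} {ω : Traj} {k : ℕ} :
    (k : ℕ∞) < hitGT w ω ↔ ∀ i ≤ k, ¬ w < ω i := by
  rw [hitGT_eq, lt_stime_iff]; rfl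

lemma measurableSet_lt_hit (w : ℝ) (k : ℕ) :
    MeasurableSet {ω : Traj | (k : ℕ∞) < hitGT w ω} := by
  have heq : {ω : Traj | (k : ℕ∞) < hitGT w ω} =
      ⋂ i ∈ Set.Iic k, {ω : Traj | w < ω i}ᶜ := by
    ext ω; simp only [Set.mem_setOf_eq, lt_hitGT_iff, Set.mem_iInter, Set.mem_compl_iff,
      Set.mem_setOf_eq, Set.mem_Iic]
  rw [heq]
  exact MeasurableSet.biInter (Set.to_countable _)
    fun i _ => (measurableSet_lt measurable_const (measurable_pi_apply i)).compl

/-- The decomposition set `E n k = {σ_n = k} ∩ {k < τ_w}`. -/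
def Eset (w : ℝ) (n k : ℕ) : Set Traj :=
  {ω : Traj | ladder ω n = (k : ℕ∞)} ∩ {ω : Traj | (k : ℕ∞) < hitGT w ω}

lemma measurableSet_Eset (w : ℝ) (n k : ℕ) : MeasurableSet (Eset w n k) :=
  (measurableSet_Lset n k).inter (measurableSet_lt_hit w k)

lemma Eset_disjoint (w : ℝ) (n : ℕ) : Pairwise (Function.onFun Disjoint (Eset w n)) := by
  intro k k' hkk'
  refine Set.disjoint_left.mpr fun ω hk hk' => ?_
  exact hkk' (by exact_mod_cast hk.1.symm.trans hk'.1)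

lemma iUnion_Eset (w : ℝ) (n : ℕ) :
    (⋃ k : ℕ, Eset w n k) = {ω : Traj | ladder ω n < hitGT w ω} := by
  ext ω
  simp only [Set.mem_iUnion, Eset, Set.mem_inter_iff, Set.mem_setOf_eq]
  constructor
  · rintro ⟨k, hk, hlt⟩; exact lt_of_eq_of_lt hk hlt
  · intro hlt
    obtain ⟨k, hk⟩ := WithTop.ne_top_iff_exists.mp hlt.ne_top
    exact ⟨k, hk.symm, lt_of_eq_of_lt hk hlt⟩

lemma measurableSet_ladder_lt_hit (w : ℝ) (n : ℕ) :
    MeasurableSet {ω : Traj | ladder ω n < hitGT w ω} := by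
  rw [← iUnion_Eset w n]
  exact MeasurableSet.iUnion fun k => measurableSet_Eset w n k

lemma measurableSet_le_tauPlus (i : ℕ) :
    MeasurableSet {ω : Traj | (i : ℕ∞) ≤ tauPlus ω} := by
  have heq : {ω : Traj | (i : ℕ∞) ≤ tauPlus ω} =
      ⋂ m ∈ Set.Iio i, {ω : Traj | 1 ≤ m ∧ ω 0 < ω m}ᶜ := by
    ext ω
    rw [Set.mem_setOf_eq, tauPlus_eq, le_stime_iff]
    simp only [Set.mem_iInter, Set.mem_compl_iff, Set.mem_setOf_eq, Set.mem_Iio]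
  rw [heq]
  refine MeasurableSet.biInter (Set.to_countable _) fun m _ => MeasurableSet.compl ?_
  by_cases h1 : 1 ≤ m
  · simp only [h1, true_and]
    exact measurableSet_lt (measurable_pi_apply 0) (measurable_pi_apply m)
  · simp only [h1, false_and, Set.setOf_false]
    exact MeasurableSet.empty

lemma measurable_costSumE_tauPlus {h : ℝ → ℝ} (hm : Monotone h) :
    Measurable (costSumE h tauPlus) := by
  refine Measurable.ennreal_tsum fun i => ?_
  have hset : MeasurableSet {ω : Traj | 1 ≤ i ∧ (i : ℕ∞) ≤ tauPlus ω} := by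
    by_cases h1 : 1 ≤ i
    · simp only [h1, true_and]; exact measurableSet_le_tauPlus i
    · simp only [h1, false_and, Set.setOf_false]; exact MeasurableSet.empty
  exact Measurable.ite hset
    (ENNReal.measurable_ofReal.comp (hm.measurable.comp (measurable_pi_apply i)))
    measurable_const

lemma measurable_block {h : ℝ → ℝ} (hm : Monotone h) (n : ℕ) :
    Measurable (block h n) := by
  refine Measurable.ennreal_tsum fun i => ?_
  have hset : MeasurableSet {ω : Traj | ladder ω n < (i : ℕ∞) ∧ (i : ℕ∞) ≤ ladder ω (n+1)} := by
    have h1 : {ω : Traj | ladder ω n < (i : ℕ∞)} = ⋃ m ∈ Set.Iio i, {ω : Traj | ladder ω n = (m : ℕ∞)} := by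
      ext ω
      simp only [Set.mem_setOf_eq, Set.mem_iUnion, Set.mem_Iio]
      constructor
      · intro hlt
        obtain ⟨m, hm'⟩ := WithTop.ne_top_iff_exists.mp hlt.ne_top
        refine ⟨m, ?_, hm'.symm⟩
        rw [← hm'] at hlt; exact ENat.coe_lt_coe.mp hlt
      · rintro ⟨m, hmi, hm'⟩
        rw [hm']; exact_mod_cast hmi
    have h2 : {ω : Traj | (i : ℕ∞) ≤ ladder ω (n+1)} =
        (⋃ m ∈ Set.Iio i, {ω : Traj | ladder ω (n+1) = (m : ℕ∞)})ᶜ := by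
      ext ω
      simp only [Set.mem_setOf_eq, Set.mem_compl_iff, Set.mem_iUnion, Set.mem_Iio, not_exists]
      constructor
      · rintro hle m hmi hm'
        rw [hm'] at hle
        exact absurd (by exact_mod_cast hle) (by omega)
      · intro hnone
        by_contra hc
        push_neg at hc
        obtain ⟨m, hm'⟩ := WithTop.ne_top_iff_exists.mp hc.ne_top
        have : m < i := by rw [← hm'] at hc; exact ENat.coe_lt_coe.mp hc
        exact hnone m this hm'.symm
    rw [Set.setOf_and, h1, h2]
    exact (MeasurableSet.biUnion (Set.to_countable _) fun m _ => measurableSet_Lset n m).inter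
      (MeasurableSet.biUnion (Set.to_countable _) fun m _ => measurableSet_Lset (n+1) m).compl
  exact Measurable.ite hset
    (ENNReal.measurable_ofReal.comp (hm.measurable.comp (measurable_pi_apply i)))
    measurable_const

/-- The shift on trajectories. -/
def shift (k : ℕ) (ω : Traj) : Traj := fun i => ω (k + i)

lemma measurable_shift (k : ℕ) : Measurable (shift k) :=
  measurable_pi_lambda _ fun i => measurable_pi_apply (k + i)

lemma tauPlus_shift {ω : Traj} (k : ℕ) :
    tauPlus (shift k ω) = stime {m : ℕ | 1 ≤ m ∧ ω k < ω (k + m)} := rfl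

lemma le_tauPlus_shift_iff {ω : Traj} {k n : ℕ} (hk : ladder ω n = (k : ℕ∞)) {i : ℕ} :
    ((i + 1 : ℕ) : ℕ∞) ≤ tauPlus (shift k ω) ↔ ((i + k + 1 : ℕ) : ℕ∞) ≤ ladder ω (n + 1) := by
  rw [tauPlus_shift, ladder_succ_of_coe hk, le_stime_iff, le_stime_iff]
  constructor
  · intro H j hj ⟨hj1, hj2⟩
    have hjk : k + (j - k) = j := by omega
    refine H (j - k) (by omega) ⟨by omega, ?_⟩
    rw [hjk]; exact hj2
  · intro H m hm ⟨hm1, hm2⟩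
    exact H (k + m) (by omega) ⟨by omega, hm2⟩

set_option maxHeartbeats 1000000 in
lemma costSumE_shift {h : ℝ → ℝ} {ω : Traj} {k n : ℕ} (hk : ladder ω n = (k : ℕ∞)) :
    costSumE h tauPlus (shift k ω) = block h n ω := by
  have hidx : ∀ i : ℕ, shift k ω (i + 1) = ω (i + k + 1) := fun i => by
    show ω (k + (i + 1)) = ω (i + k + 1)
    congr 1; omega
  have hcond : ∀ i : ℕ, (1 ≤ i + 1 ∧ ((i + 1 : ℕ) : ℕ∞) ≤ tauPlus (shift k ω)) ↔
      (ladder ω n < ((i + k + 1 : ℕ) : ℕ∞) ∧ ((i + k + 1 : ℕ) : ℕ∞) ≤ ladder ω (n + 1)) := by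
    intro i
    constructor
    · rintro ⟨-, h2⟩
      refine ⟨?_, (le_tauPlus_shift_iff hk).mp h2⟩
      rw [hk]
      exact ENat.coe_lt_coe.mpr (by omega)
    · rintro ⟨-, h2⟩
      exact ⟨by omega, (le_tauPlus_shift_iff hk).mpr h2⟩
  set F : ℕ → ℝ≥0∞ := fun i =>
    if 1 ≤ i ∧ (i : ℕ∞) ≤ tauPlus (shift k ω) then ENNReal.ofReal (h (shift k ω i)) else 0 with hF
  set G : ℕ → ℝ≥0∞ := fun i =>
    if ladder ω n < (i : ℕ∞) ∧ (i : ℕ∞) ≤ ladder ω (n+1) then ENNReal.ofReal (h (ω i)) else 0 with hG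
  have e1 : costSumE h tauPlus (shift k ω) = ∑' i, F i := rfl
  have e2 : block h n ω = ∑' i, G i := rfl
  have hGsupp : ∀ j : ℕ, G j ≠ 0 → k < j := by
    intro j hj
    by_contra hc
    apply hj
    rw [hG]
    simp only
    rw [if_neg]
    rintro ⟨h1, -⟩
    rw [hk] at h1
    exact hc (ENat.coe_lt_coe.mp h1)
  have key : ∀ m : ℕ, F m = G (m + k) := by
    intro m
    match m with
    | 0 =>
      have hgk : G (0 + k) = 0 := by
        rw [hG]; simp only
        rw [if_neg]
        rintro ⟨h1, -⟩
        rw [hk] at h1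
        have := ENat.coe_lt_coe.mp h1
        omega
      rw [hgk, hF]
      simp
    | m + 1 =>
      have hidx2 : m + 1 + k = m + k + 1 := by omega
      rw [hF, hG, hidx2]
      simp only
      by_cases hc : 1 ≤ m + 1 ∧ ((m + 1 : ℕ) : ℕ∞) ≤ tauPlus (shift k ω)
      · rw [if_pos hc, if_pos ((hcond m).mp hc), hidx m]
      · rw [if_neg hc, if_neg (fun hx => hc ((hcond m).mpr hx))]
  rw [e1, e2]
  refine tsum_eq_tsum_of_ne_zero_bij (fun x => x.1 - k) ?_ ?_ ?_
  · intro x y hxy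
    have hx := hGsupp x.1 x.2
    have hy := hGsupp y.1 y.2
    exact Subtype.ext (by simp only at hxy; omega)
  · intro m hm
    have hm1 : 1 ≤ m := by
      by_contra hc
      apply hm
      have : m = 0 := by omega
      rw [this, hF]
      simp
    have hGm : G (m + k) ≠ 0 := by rw [← key m]; exact hm
    exact ⟨⟨m + k, hGm⟩, by simp only; omega⟩
  · intro x
    have hx := hGsupp x.1 x.2
    have hidx3 : x.1 - k + k = x.1 := by omega
    rw [key (x.1 - k), hidx3]

lemma markov_lintegral (M : MarkovFamily) (y : ℝ) (k : ℕ) {B : Set (Fin (k+1) → ℝ)}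
    (hB : MeasurableSet B) {f : Traj → ℝ≥0∞} (hf : Measurable f) :
    ∫⁻ ω in {ω : Traj | (fun i : Fin (k+1) => ω i) ∈ B}, f (shift k ω) ∂(M.P y)
      = ∫⁻ ω in {ω : Traj | (fun i : Fin (k+1) => ω i) ∈ B},
          ∫⁻ ω', f ω' ∂(M.P (ω k)) ∂(M.P y) := by
  set B' : Set Traj := {ω : Traj | (fun i : Fin (k+1) => ω i) ∈ B} with hB'
  have hB'm : MeasurableSet B' :=
    (measurable_pi_lambda (fun (ω : Traj) (i : Fin (k+1)) => ω (i : ℕ))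
      fun i => measurable_pi_apply _) hB
  have hker : Measurable (fun ω : Traj => M.P (ω k)) :=
    (ProbabilityTheory.Kernel.measurable M.P).comp (measurable_pi_apply k)
  have hmeas_eq : Measure.map (shift k) ((M.P y).restrict B')
      = ((M.P y).restrict B').bind (fun ω => M.P (ω k)) := by
    ext A hA
    rw [Measure.map_apply (measurable_shift k) hA,
      Measure.restrict_apply ((measurable_shift k) hA),
      Measure.bind_apply hA hker.aemeasurable]
    have hmk := M.markov y k B A hB hA
    rw [Set.inter_comm]
    exact hmk
  calc ∫⁻ ω in B', f (shift k ω) ∂(M.P y)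
      = ∫⁻ ω', f ω' ∂(Measure.map (shift k) ((M.P y).restrict B')) :=
        (lintegral_map hf (measurable_shift k)).symm
    _ = ∫⁻ ω', f ω' ∂(((M.P y).restrict B').bind (fun ω => M.P (ω k))) := by rw [hmeas_eq]
    _ = ∫⁻ ω in B', ∫⁻ ω', f ω' ∂(M.P (ω k)) ∂(M.P y) :=
        Measure.lintegral_bind hker.aemeasurable hf.aemeasurable

lemma Eset_congr {w : ℝ} {n k : ℕ} {ω ω' : Traj} (hag : ∀ i ≤ k, ω i = ω' i)
    (hω : ω ∈ Eset w n k) : ω' ∈ Eset w n k := by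
  obtain ⟨h1, h2⟩ := hω
  refine ⟨ladder_congr hag n h1, ?_⟩
  rw [Set.mem_setOf_eq, lt_hitGT_iff] at h2 ⊢
  intro i hi
  rw [← hag i hi]
  exact h2 i hi

lemma Eset_cylinder (w : ℝ) (n k : ℕ) :
    ∃ B : Set (Fin (k+1) → ℝ), MeasurableSet B ∧
      Eset w n k = {ω : Traj | (fun i : Fin (k+1) => ω i) ∈ B} := by
  refine ⟨(fun (v : Fin (k+1) → ℝ) (j : ℕ) => v ⟨min j k, by omega⟩) ⁻¹' Eset w n k,
    (measurable_pi_lambda _ fun j => measurable_pi_apply _) (measurableSet_Eset w n k), ?_⟩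
  ext ω
  simp only [Set.mem_setOf_eq, Set.mem_preimage]
  have hag : ∀ i ≤ k, ω i = (fun (j : ℕ) => ω (min j k)) i := by
    intro i hi
    show ω i = ω (min i k)
    congr 1
    omega
  constructor
  · exact fun hmem => Eset_congr hag hmem
  · exact fun hmem => Eset_congr (fun i hi => (hag i hi).symm) hmem

lemma per_n (M : MarkovFamily) {h : ℝ → ℝ} (hm : Monotone h) (w : ℝ) (y : ℝ) (n : ℕ) :
    ∫⁻ ω in {ω : Traj | ladder ω n < hitGT w ω},
        HfunE M h (ω ((ladder ω n).toNat)) ∂(M.P y)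
      = ∫⁻ ω in {ω : Traj | ladder ω n < hitGT w ω}, block h n ω ∂(M.P y) := by
  rw [← iUnion_Eset w n,
    lintegral_iUnion (measurableSet_Eset w n) (Eset_disjoint w n),
    lintegral_iUnion (measurableSet_Eset w n) (Eset_disjoint w n)]
  refine tsum_congr fun k => ?_
  obtain ⟨B, hBm, hBeq⟩ := Eset_cylinder w n k
  calc ∫⁻ ω in Eset w n k, HfunE M h (ω ((ladder ω n).toNat)) ∂(M.P y)
      = ∫⁻ ω in Eset w n k, ∫⁻ ω', costSumE h tauPlus ω' ∂(M.P (ω k)) ∂(M.P y) := by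
        refine setLIntegral_congr_fun (measurableSet_Eset w n k) (fun ω hω => ?_)
        rw [HfunE, hω.1, ENat.toNat_coe]
    _ = ∫⁻ ω in Eset w n k, costSumE h tauPlus (shift k ω) ∂(M.P y) := by
        rw [hBeq]
        exact (markov_lintegral M y k hBm (measurable_costSumE_tauPlus hm)).symm
    _ = ∫⁻ ω in Eset w n k, block h n ω ∂(M.P y) := by
        refine setLIntegral_congr_fun (measurableSet_Eset w n k) (fun ω hω => ?_)
        exact costSumE_shift hω.1


/-- identity (∗): the total running cost up to `τ_w` decomposes along the
ascending ladder epochs: `∑_{n=0}^∞ E_y[H(Y_{σ_n}) 1_{σ_n < τ_w}] = E_y[∑_{i=1}^{τ_w} h(Y_i)]`. -/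
theorem running_cost_ladder_decomposition
    (M : MarkovFamily) (h : ℝ → ℝ)
    (hhmono : Monotone h) (hh0 : ∀ z : ℝ, 0 ≤ h z)
    (y w : ℝ) (hyw : y ≤ w)
    (hfin : ∀ᵐ ω ∂(M.P y), hitGT w ω ≠ ⊤)
    (hcost : ∫⁻ ω, costSumE h (hitGT w) ω ∂(M.P y) < ⊤) :
    ∑' n : ℕ, ∫⁻ ω in {ω : Traj | ladder ω n < hitGT w ω},
        HfunE M h (ω ((ladder ω n).toNat)) ∂(M.P y)
      = ∫⁻ ω, costSumE h (hitGT w) ω ∂(M.P y) := by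
  calc ∑' n : ℕ, ∫⁻ ω in {ω : Traj | ladder ω n < hitGT w ω},
        HfunE M h (ω ((ladder ω n).toNat)) ∂(M.P y)
      = ∑' n : ℕ, ∫⁻ ω, Set.indicator {ω' : Traj | ladder ω' n < hitGT w ω'}
          (block h n) ω ∂(M.P y) := by
        refine tsum_congr fun n => ?_
        rw [per_n M hhmono w y n, lintegral_indicator (measurableSet_ladder_lt_hit w n)]
    _ = ∫⁻ ω, ∑' n : ℕ, Set.indicator {ω' : Traj | ladder ω' n < hitGT w ω'}
          (block h n) ω ∂(M.P y) :=
        (lintegral_tsum fun n => ((measurable_block hhmono n).indicator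
          (measurableSet_ladder_lt_hit w n)).aemeasurable).symm
    _ = ∫⁻ ω, costSumE h (hitGT w) ω ∂(M.P y) :=
        lintegral_congr_ae (hfin.mono fun ω hω => blocks_decompose h hω)


end Stmt

end
end

section
/- If γ is concave on ℝ and h is nondecreasing, then the function y ↦ γ(y) − φ(y) = E[γ(y) − γ(y + S_{τ⁺})] + E[Σ_{i=1}^{τ⁺} h(y + S_i)] is nondecreasing on ℝ; equivalently, f is nonincreasing on ℝ. -/
open MeasureTheory ProbabilityTheory Filter Set
open scoped ENNReal NNReal ENat

noncomputable section

namespace StmtRW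

variable {Ω : Type*}

/-- Positive part of an extended real number, as an element of `ℝ≥0∞`. -/
noncomputable def epos (x : EReal) : ℝ≥0∞ :=
  if x = ⊤ then ⊤ else ENNReal.ofReal x.toReal

/-- Expectation of an extended-real random variable (with the convention `∞ - ∞ = -∞`). -/
noncomputable def eexp [MeasurableSpace Ω] (μ : Measure Ω) (Z : Ω → EReal) : EReal :=
  ((∫⁻ ω, epos (Z ω) ∂μ : ℝ≥0∞) : EReal) - ((∫⁻ ω, epos (-(Z ω)) ∂μ : ℝ≥0∞) : EReal)

/-- The random walk `S_n = ∑_{i=1}^n X_i`. -/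
def S (X : ℕ → Ω → ℝ) (n : ℕ) (ω : Ω) : ℝ := ∑ i ∈ Finset.Icc 1 n, X i ω

/-- `τ⁺ = inf {n ≥ 1 : S_n > 0}`. -/
noncomputable def tauPlus (X : ℕ → Ω → ℝ) (ω : Ω) : ℕ∞ :=
  sInf ((fun n : ℕ => (n : ℕ∞)) '' {n : ℕ | 1 ≤ n ∧ 0 < S X n ω})

/-- First entry time of `Y^y = y + S` into `(x, ∞)`. -/
noncomputable def hitGT (X : ℕ → Ω → ℝ) (x y : ℝ) (ω : Ω) : ℕ∞ :=
  sInf ((fun n : ℕ => (n : ℕ∞)) '' {n : ℕ | x < y + S X n ω})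

/-- First entry time of `Y^y = y + S` into `[x, ∞)`. -/
noncomputable def hitGE (X : ℕ → Ω → ℝ) (x y : ℝ) (ω : Ω) : ℕ∞ :=
  sInf ((fun n : ℕ => (n : ℕ∞)) '' {n : ℕ | x ≤ y + S X n ω})

/-- Pay-off when stopping the walk started at `y` at (deterministic) time `n`. -/
def payoffAt (γ h : ℝ → ℝ) (X : ℕ → Ω → ℝ) (y : ℝ) (n : ℕ) (ω : Ω) : ℝ :=
  γ (y + S X n ω) - ∑ i ∈ Finset.Icc 1 n, h (y + S X i ω)

/-- Pay-off of a possibly infinite random time, with the value `-∞` on `{τ = ∞}`. -/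
def payoffE (γ h : ℝ → ℝ) (X : ℕ → Ω → ℝ) (y : ℝ) (τ : Ω → ℕ∞) (ω : Ω) : EReal :=
  if τ ω = ⊤ then (⊥ : EReal) else ((payoffAt γ h X y (τ ω).toNat ω : ℝ) : EReal)

/-- `τ` is a (possibly infinite) stopping time of the natural filtration of `(X_i)_{i ≥ 1}`,
i.e. `{τ ≤ n} ∈ σ(X_1, …, X_n)` for every `n`. -/
def IsStopTime [MeasurableSpace Ω] (X : ℕ → Ω → ℝ) (τ : Ω → ℕ∞) : Prop :=
  ∀ n : ℕ, MeasurableSet[MeasurableSpace.comap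
      (fun ω => fun i : Fin n => X (i + 1) ω) inferInstance] {ω : Ω | τ ω ≤ (n : ℕ∞)}

/-- The value function `V(y)`, a supremum over all stopping times of the natural
filtration, the pay-off being interpreted as `-∞` on `{τ = ∞}`. -/
noncomputable def V [MeasurableSpace Ω] (μ : Measure Ω) (X : ℕ → Ω → ℝ) (γ h : ℝ → ℝ)
    (y : ℝ) : EReal :=
  ⨆ τ : {τ : Ω → ℕ∞ // IsStopTime X τ}, eexp μ (payoffE γ h X y τ.1)

/-- `φ(y) = E[γ(y + S_{τ⁺}) - ∑_{i=1}^{τ⁺} h(y + S_i)]`. -/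
noncomputable def phi [MeasurableSpace Ω] (μ : Measure Ω) (X : ℕ → Ω → ℝ) (γ h : ℝ → ℝ)
    (y : ℝ) : ℝ :=
  ∫ ω, payoffAt γ h X y (tauPlus X ω).toNat ω ∂μ

/-- `f(y) = (φ(y) - γ(y))/E[τ⁺]`. -/
noncomputable def ffun [MeasurableSpace Ω] (μ : Measure Ω) (X : ℕ → Ω → ℝ) (γ h : ℝ → ℝ)
    (y : ℝ) : ℝ :=
  (phi μ X γ h y - γ y) / (∫ ω, ((tauPlus X ω).toNat : ℝ) ∂μ)

/-- `(X_i)_{i ≥ 1}` are i.i.d. with `P(X_1 > 0) > 0`. -/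
structure IsIIDWalk [MeasurableSpace Ω] (μ : Measure Ω) (X : ℕ → Ω → ℝ) : Prop where
  meas : ∀ i, Measurable (X i)
  indep : iIndepFun (m := fun _ : ℕ => (inferInstance : MeasurableSpace ℝ))
    (fun i : ℕ => X (i + 1)) μ
  ident : ∀ i : ℕ, IdentDistrib (X (i + 1)) (X 1) μ μ
  pos : 0 < μ {ω : Ω | 0 < X 1 ω}

/-- Assumption (Opt) for the random walk: `E[sup_n (γ(y+S_n) - ∑_{i=1}^n h(y+S_i))] < ∞`
and `γ(y+S_n) - ∑_{i=1}^n h(y+S_i) → -∞` a.s. -/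
def OptAssumption [MeasurableSpace Ω] (μ : Measure Ω) (X : ℕ → Ω → ℝ) (γ h : ℝ → ℝ) : Prop :=
  ∀ y : ℝ,
    (∫⁻ ω, epos (⨆ n : ℕ, ((payoffAt γ h X y n ω : ℝ) : EReal)) ∂μ) < ⊤ ∧
    (∀ᵐ ω ∂μ, Tendsto (fun n => payoffAt γ h X y n ω) atTop atBot)


lemma concave_increment {γ : ℝ → ℝ} (hc : ConcaveOn ℝ Set.univ γ)
    {a b s : ℝ} (hab : a ≤ b) (hs : 0 ≤ s) :
    γ (b + s) - γ b ≤ γ (a + s) - γ a := by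
  rcases eq_or_lt_of_le (by linarith : a ≤ b + s) with hd | hd
  · have ha : a = b := le_antisymm hab (by linarith)
    have hs0 : s = 0 := by linarith
    simp [ha, hs0]
  · set d := b + s - a with hdd
    have hdpos : 0 < d := by simp [hdd]; linarith
    set l := s / d with hl
    have hl0 : 0 ≤ l := div_nonneg hs hdpos.le
    have hl1 : 0 ≤ 1 - l := by
      have : l ≤ 1 := (div_le_one hdpos).2 (by linarith)
      linarith
    have hsum : l + (1 - l) = 1 := by ring
    have h1 := hc.2 (Set.mem_univ a) (Set.mem_univ (b + s)) hl0 hl1 hsum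
    have h2 := hc.2 (Set.mem_univ a) (Set.mem_univ (b + s)) hl1 hl0 (by ring)
    have he1 : l * a + (1 - l) * (b + s) = b := by
      have : l * d = s := by rw [hl]; exact div_mul_cancel₀ s hdpos.ne'
      nlinarith [this]
    have he2 : (1 - l) * a + l * (b + s) = a + s := by
      have : l * d = s := by rw [hl]; exact div_mul_cancel₀ s hdpos.ne'
      nlinarith [this]
    simp only [smul_eq_mul] at h1 h2
    rw [he1] at h1
    rw [he2] at h2
    linarith

lemma tauPlus_spec {X : ℕ → Ω → ℝ} {ω : Ω} (hne : tauPlus X ω ≠ ⊤) :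
    1 ≤ (tauPlus X ω).toNat ∧ 0 < S X (tauPlus X ω).toNat ω := by
  set A : Set ℕ := {n : ℕ | 1 ≤ n ∧ 0 < S X n ω} with hA
  have hAne : A.Nonempty := by
    by_contra hcon
    rw [Set.not_nonempty_iff_eq_empty] at hcon
    apply hne
    simp [tauPlus, ← hA, hcon]
  have hmem : sInf A ∈ A := Nat.sInf_mem hAne
  have heq : tauPlus X ω = ((sInf A : ℕ) : ℕ∞) := by
    apply le_antisymm
    · exact sInf_le ⟨sInf A, hmem, rfl⟩
    · apply le_sInf
      rintro x ⟨n, hn, rfl⟩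
      rw [hA]; exact Nat.cast_le.mpr (Nat.sInf_le hn)
  rw [heq, ENat.toNat_coe]
  exact hmem

/-- if `γ` is concave (on all of `ℝ`) and `h` is nondecreasing, then
`y ↦ γ(y) - φ(y)` is nondecreasing; equivalently, `f` is nonincreasing on `ℝ`. -/
theorem gamma_sub_phi_monotone {Ω : Type*}
    [MeasurableSpace Ω] (μ : Measure Ω) [IsProbabilityMeasure μ]
    (X : ℕ → Ω → ℝ) (hiid : IsIIDWalk μ X)
    (γ h : ℝ → ℝ) (hγ : Monotone γ) (hhmono : Monotone h) (hh0 : ∀ z : ℝ, 0 ≤ h z)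
    (hτfin : ∀ᵐ ω ∂μ, tauPlus X ω ≠ ⊤)
    (hτint : Integrable (fun ω => ((tauPlus X ω).toNat : ℝ)) μ)
    (hwd : ∀ y : ℝ, Integrable (fun ω => payoffAt γ h X y (tauPlus X ω).toNat ω) μ)
    (hconc : ConcaveOn ℝ Set.univ γ)
    (hEpos : 0 < ∫ ω, ((tauPlus X ω).toNat : ℝ) ∂μ) :
    Monotone (fun y => γ y - phi μ X γ h y) ∧ Antitone (ffun μ X γ h) := by
  have key : ∀ y₁ y₂ : ℝ, y₁ ≤ y₂ →
      phi μ X γ h y₂ - γ y₂ ≤ phi μ X γ h y₁ - γ y₁ := by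
    intro y₁ y₂ hy
    have hae : ∀ᵐ ω ∂μ, payoffAt γ h X y₂ (tauPlus X ω).toNat ω ≤
        payoffAt γ h X y₁ (tauPlus X ω).toNat ω + (γ y₂ - γ y₁) := by
      filter_upwards [hτfin] with ω hω
      obtain ⟨hn1, hSpos⟩ := tauPlus_spec hω
      set n := (tauPlus X ω).toNat
      have hγineq : γ (y₂ + S X n ω) - γ y₂ ≤ γ (y₁ + S X n ω) - γ y₁ :=
        concave_increment hconc hy hSpos.le
      have hsum : ∑ i ∈ Finset.Icc 1 n, h (y₁ + S X i ω) ≤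
          ∑ i ∈ Finset.Icc 1 n, h (y₂ + S X i ω) :=
        Finset.sum_le_sum fun i _ => hhmono (by linarith)
      simp only [payoffAt]
      linarith
    have hint : ∫ ω, payoffAt γ h X y₂ (tauPlus X ω).toNat ω ∂μ ≤
        ∫ ω, (payoffAt γ h X y₁ (tauPlus X ω).toNat ω + (γ y₂ - γ y₁)) ∂μ :=
      integral_mono_ae (hwd y₂) ((hwd y₁).add (integrable_const _)) hae
    rw [integral_add (hwd y₁) (integrable_const _), integral_const] at hint
    simp only [probReal_univ, one_smul] at hint
    simp only [phi]
    linarith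
  refine ⟨fun y₁ y₂ hy => ?_, fun y₁ y₂ hy => ?_⟩
  · have := key y₁ y₂ hy
    simp only
    linarith
  · have := key y₁ y₂ hy
    simp only [ffun]
    gcongr
  

end StmtRW

end
end

section
/- The supremum of the payoff over all admissible stopping times equals the supremum over the upper regular ones: sup_{τ ∈ T} E[γ(X_τ) − ∫_0^τ h(X_s) ds] = sup_{τ ∈ U} E[γ(X_τ) − ∫_0^τ h(X_s) ds]. -/
open MeasureTheory ProbabilityTheory Filter Set Topology
open scoped ENNReal NNReal

noncomputable section

namespace StmtC

variable {Ω : Type*}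

/-- The accumulated running cost `∫_0^τ h(X_s) ds` (as an extended real; `h ≥ 0`). -/
noncomputable def costC (X : ℝ → Ω → ℝ) (h : ℝ → ℝ) (τ : Ω → ℝ) (ω : Ω) : ℝ≥0∞ :=
  ∫⁻ s in Set.Ioc (0 : ℝ) (τ ω), ENNReal.ofReal (h (X s ω))

/-- The pay-off `γ(X_τ) - ∫_0^τ h(X_s) ds` when stopping at `τ`. -/
noncomputable def payoffC (X : ℝ → Ω → ℝ) (γ h : ℝ → ℝ) (τ : Ω → ℝ) (ω : Ω) : ℝ :=
  γ (X (τ ω) ω) - (costC X h τ ω).toReal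

/-- Expected pay-off `J(τ) = E[γ(X_τ) - ∫_0^τ h(X_s) ds]`. -/
noncomputable def J [MeasurableSpace Ω] (μ : Measure Ω) (X : ℝ → Ω → ℝ) (γ h : ℝ → ℝ)
    (τ : Ω → ℝ) : ℝ :=
  ∫ ω, payoffC X γ h τ ω ∂μ

/-- The class `T` of admissible stopping times: finite stopping times `τ ≥ 0` with
`E[τ] < ∞`, `E[∫_0^τ h(X_s) ds] < ∞` and `E[sup_{t ≤ τ} |γ(X_t)|] < ∞`. -/
def Tset [m : MeasurableSpace Ω] (μ : Measure Ω) (ℱ : Filtration ℝ m) (X : ℝ → Ω → ℝ)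
    (γ h : ℝ → ℝ) : Set (Ω → ℝ) :=
  {τ | IsStoppingTime ℱ (fun ω => (τ ω : WithTop ℝ)) ∧ (∀ ω, 0 ≤ τ ω) ∧ Integrable τ μ ∧
    (∫⁻ ω, costC X h τ ω ∂μ) < ⊤ ∧
    (∫⁻ ω, ⨆ t ∈ Set.Icc (0 : ℝ) (τ ω), ENNReal.ofReal |γ (X t ω)| ∂μ) < ⊤}

/-- A stopping time is upper regular if it is a.s. bounded by the first entry time of `X`
into some half-line `[ȳ, ∞)` (equivalently: strictly before `τ`, the process stays
below `ȳ`). -/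
def UpperRegular [MeasurableSpace Ω] (μ : Measure Ω) (X : ℝ → Ω → ℝ) (τ : Ω → ℝ) : Prop :=
  ∃ ybar : ℝ, ∀ᵐ ω ∂μ, ∀ t : ℝ, 0 ≤ t → t < τ ω → X t ω < ybar

/-- The running maximum `M_t = sup_{r ≤ t} X_r` (over `r ∈ [0, t]`). -/
noncomputable def runMax (X : ℝ → Ω → ℝ) (t : ℝ) (ω : Ω) : ℝ :=
  sSup ((fun r => X r ω) '' Set.Icc (0 : ℝ) t)

/-- The first passage time `τ_y = inf {t ≥ 0 : X_t > y} ∈ [0, ∞]`. -/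
noncomputable def passage (X : ℝ → Ω → ℝ) (y : ℝ) (ω : Ω) : ℝ≥0∞ :=
  sInf (ENNReal.ofReal '' {t : ℝ | 0 ≤ t ∧ y < X t ω})

/-! ### Auxiliary lemmas -/

section Aux

set_option linter.unusedSectionVars false

variable {Ω : Type*} [m : MeasurableSpace Ω]

lemma aux_jointMeas (X : ℝ → Ω → ℝ) (hm : ∀ t, Measurable (X t))
    (hrc : ∀ ω, ∀ t : ℝ, ContinuousWithinAt (fun s => X s ω) (Set.Ici t) t) :
    Measurable fun p : ℝ × Ω => X p.1 p.2 := by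
  set A : ℕ → ℝ → ℝ := fun k t => (⌈t * 2 ^ k⌉ : ℝ) / 2 ^ k with hA
  have hpow : ∀ k : ℕ, (0:ℝ) < 2 ^ k := fun k => by positivity
  have hge : ∀ k t, t ≤ A k t := by
    intro k t
    rw [hA, le_div_iff₀ (hpow k)]
    exact Int.le_ceil _
  have hle : ∀ k t, A k t ≤ t + (1/2) ^ k := by
    intro k t
    rw [hA, div_le_iff₀ (hpow k)]
    calc (⌈t * 2 ^ k⌉ : ℝ) ≤ t * 2 ^ k + 1 := (Int.ceil_lt_add_one _).le
    _ = (t + (1/2)^k) * 2 ^ k := by rw [add_mul, ← mul_pow]; norm_num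
  have hmeasA : ∀ k, Measurable fun p : ℝ × Ω => X (A k p.1) p.2 := by
    intro k
    have h1 : Measurable fun q : Ω × ℤ => X ((q.2 : ℝ) / 2 ^ k) q.1 :=
      measurable_from_prod_countable_left fun i => hm ((i:ℝ)/2^k)
    have h2 : Measurable fun p : ℝ × Ω => (p.2, (⌈p.1 * 2 ^ k⌉ : ℤ)) :=
      measurable_snd.prodMk (Int.measurable_ceil.comp (measurable_fst.mul_const _))
    exact h1.comp h2
  refine measurable_of_tendsto_metrizable hmeasA ?_
  rw [tendsto_pi_nhds]
  intro p
  have htA : Tendsto (fun k => A k p.1) atTop (𝓝[Set.Ici p.1] p.1) := by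
    refine tendsto_nhdsWithin_of_tendsto_nhds_of_eventually_within _ ?_
      (Eventually.of_forall fun k => hge k p.1)
    refine tendsto_of_tendsto_of_tendsto_of_le_of_le (g := fun _ => p.1)
      (h := fun k => p.1 + (1/2:ℝ)^k) tendsto_const_nhds ?_ (fun k => hge k p.1)
      (fun k => hle k p.1)
    have : Tendsto (fun k : ℕ => (1/2:ℝ)^k) atTop (𝓝 0) :=
      tendsto_pow_atTop_nhds_zero_of_lt_one (by norm_num) (by norm_num)
    simpa using tendsto_const_nhds.add this
  exact ((hrc p.2 p.1).tendsto).comp htA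

lemma aux_passage_le_iff (X : ℝ → Ω → ℝ)
    (hrc : ∀ ω, ∀ t : ℝ, ContinuousWithinAt (fun s => X s ω) (Set.Ici t) t)
    (y t : ℝ) (ht : 0 ≤ t) (ω : Ω) :
    passage X y ω ≤ ENNReal.ofReal t ↔
      ∀ k : ℕ, ∃ q : ℚ, 0 ≤ (q:ℝ) ∧ (q:ℝ) < t + 1/(k+1) ∧ y < X (q:ℝ) ω := by
  constructor
  · intro hp k
    have hε : (0:ℝ) < 1/(k+1) := by positivity
    have hlt : passage X y ω < ENNReal.ofReal (t + 1/(k+1)) :=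
      lt_of_le_of_lt hp (ENNReal.ofReal_lt_ofReal_iff (by linarith)|>.2 (by linarith))
    obtain ⟨a, ha, halt⟩ := sInf_lt_iff.mp hlt
    obtain ⟨s₀, ⟨hs₀0, hs₀X⟩, rfl⟩ := ha
    have hs₀lt : s₀ < t + 1/(k+1) :=
      (ENNReal.ofReal_lt_ofReal_iff_of_nonneg hs₀0).mp halt
    have hev : {u : ℝ | y < X u ω} ∈ 𝓝[Set.Ici s₀] s₀ :=
      hrc ω s₀ (isOpen_Ioi.mem_nhds hs₀X)
    obtain ⟨u, hu, hsub⟩ := mem_nhdsGE_iff_exists_Ico_subset.mp hev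
    obtain ⟨q, hq1, hq2⟩ := exists_rat_btwn (lt_min (Set.mem_Ioi.mp hu) (by linarith) :
      s₀ < min u (t + 1/(k+1)))
    refine ⟨q, by linarith, (lt_min_iff.mp hq2).2, hsub ⟨hq1.le, (lt_min_iff.mp hq2).1⟩⟩
  · intro hq
    refine ENNReal.le_of_forall_pos_le_add fun ε hε _ => ?_
    obtain ⟨k, hk⟩ := exists_nat_one_div_lt (by exact_mod_cast hε : (0:ℝ) < (ε:ℝ))
    obtain ⟨q, hq0, hqlt, hqX⟩ := hq k
    calc passage X y ω ≤ ENNReal.ofReal q := sInf_le ⟨q, ⟨hq0, hqX⟩, rfl⟩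
      _ ≤ ENNReal.ofReal (t + 1/(k+1)) := ENNReal.ofReal_le_ofReal hqlt.le
      _ ≤ ENNReal.ofReal t + ENNReal.ofReal (1/(k+1)) := ENNReal.ofReal_add_le
      _ ≤ ENNReal.ofReal t + ε := by
          gcongr
          rw [← ENNReal.ofReal_coe_nnreal]
          exact ENNReal.ofReal_le_ofReal (by push_cast; linarith)

lemma aux_passage_le_mem (ℱ : Filtration ℝ m) (X : ℝ → Ω → ℝ) (hadapt : Adapted ℱ X)
    (hrc : ∀ ω, ∀ t : ℝ, ContinuousWithinAt (fun s => X s ω) (Set.Ici t) t)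
    (hrightF : ∀ t : ℝ, (ℱ t : MeasurableSpace Ω) = ⨅ s ∈ Set.Ioi t, (ℱ s : MeasurableSpace Ω))
    (y t : ℝ) (ht : 0 ≤ t) :
    MeasurableSet[ℱ t] {ω | passage X y ω ≤ ENNReal.ofReal t} := by
  set A : ℕ → Set Ω := fun k =>
    ⋃ (q : ℚ) (_ : 0 ≤ (q:ℝ) ∧ (q:ℝ) < t + 1/(k+1)), {ω | y < X (q:ℝ) ω} with hA
  have hset : {ω | passage X y ω ≤ ENNReal.ofReal t} = ⋂ k, A k := by
    ext ω
    simp only [Set.mem_setOf_eq, aux_passage_le_iff X hrc y t ht ω, hA, Set.mem_iInter,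
      Set.mem_iUnion, Set.mem_setOf_eq, exists_prop]
    constructor
    · intro hh k
      obtain ⟨q, h1, h2, h3⟩ := hh k
      exact ⟨q, ⟨h1, h2⟩, h3⟩
    · intro hh k
      obtain ⟨q, ⟨h1, h2⟩, h3⟩ := hh k
      exact ⟨q, h1, h2, h3⟩
  have hanti : Antitone A := by
    intro k k' hk ω hω
    simp only [hA, Set.mem_iUnion, exists_prop] at hω ⊢
    obtain ⟨q, hq, hX⟩ := hω
    have hkk : (k:ℝ) ≤ (k':ℝ) := Nat.cast_le.mpr hk
    have hdiv : (1:ℝ)/(k'+1) ≤ 1/(k+1) := by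
      apply one_div_le_one_div_of_le (by positivity)
      linarith
    exact ⟨q, ⟨hq.1, by linarith [hq.2]⟩, hX⟩
  have hAmem : ∀ (k : ℕ) (s : ℝ), t + 1/(k+1) ≤ s → MeasurableSet[ℱ s] (A k) := by
    intro k s hs
    refine MeasurableSet.iUnion fun q => MeasurableSet.iUnion fun hq => ?_
    have h1 : MeasurableSet[ℱ (q:ℝ)] {ω | y < X (q:ℝ) ω} :=
      (hadapt (q:ℝ)) measurableSet_Ioi
    exact ℱ.mono (by linarith [hq.2] : (q:ℝ) ≤ s) _ h1
  rw [hset, hrightF t]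
  rw [MeasurableSpace.measurableSet_iInf]
  intro s
  rw [MeasurableSpace.measurableSet_iInf]
  intro hs
  obtain ⟨K, hK⟩ := exists_nat_one_div_lt (sub_pos.mpr (Set.mem_Ioi.mp hs))
  have : (⋂ k, A k) = ⋂ k, A (k + K) := by
    apply Set.Subset.antisymm
    · exact Set.subset_iInter fun k => Set.iInter_subset A (k + K)
    · exact Set.subset_iInter fun k =>
        (Set.iInter_subset (fun j => A (j + K)) k).trans (hanti (Nat.le_add_right k K))
  rw [this]
  refine MeasurableSet.iInter fun k => hAmem (k + K) s ?_
  have h1 : (1:ℝ)/(k + K + 1) ≤ 1/(K+1) := by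
    apply one_div_le_one_div_of_le (by positivity)
    push_cast; linarith
  push_cast at h1 ⊢
  linarith

lemma aux_passage_measurable (ℱ : Filtration ℝ m) (X : ℝ → Ω → ℝ) (hadapt : Adapted ℱ X)
    (hrc : ∀ ω, ∀ t : ℝ, ContinuousWithinAt (fun s => X s ω) (Set.Ici t) t)
    (hrightF : ∀ t : ℝ, (ℱ t : MeasurableSpace Ω) = ⨅ s ∈ Set.Ioi t, (ℱ s : MeasurableSpace Ω))
    (y : ℝ) : Measurable (passage X y) := by
  apply measurable_of_Iic
  intro a
  rcases eq_or_ne a ⊤ with rfl | ha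
  · simp
  · have : passage X y ⁻¹' Set.Iic a = {ω | passage X y ω ≤ ENNReal.ofReal a.toReal} := by
      ext ω; simp [ENNReal.ofReal_toReal ha]
    rw [this]
    exact ℱ.le _ _ (aux_passage_le_mem ℱ X hadapt hrc hrightF y a.toReal ENNReal.toReal_nonneg)

lemma aux_le_X_passage (X : ℝ → Ω → ℝ)
    (hrc : ∀ ω, ∀ t : ℝ, ContinuousWithinAt (fun s => X s ω) (Set.Ici t) t)
    (y : ℝ) (ω : Ω) (hfin : passage X y ω ≠ ⊤) :
    y ≤ X ((passage X y ω).toReal) ω := by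
  by_contra hX
  push_neg at hX
  set d := (passage X y ω).toReal with hd
  have hofd : ENNReal.ofReal d = passage X y ω := ENNReal.ofReal_toReal hfin
  have hev : {u : ℝ | X u ω < y} ∈ 𝓝[Set.Ici d] d :=
    hrc ω d (isOpen_Iio.mem_nhds hX)
  obtain ⟨u, hu, hsub⟩ := mem_nhdsGE_iff_exists_Ico_subset.mp hev
  have hdu : d < u := Set.mem_Ioi.mp hu
  have hub : ∀ s ∈ {t : ℝ | 0 ≤ t ∧ y < X t ω}, u ≤ s := by
    intro s hs
    have hds : d ≤ s := by
      have h1 : passage X y ω ≤ ENNReal.ofReal s := sInf_le ⟨s, hs, rfl⟩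
      have := ENNReal.toReal_mono ENNReal.ofReal_ne_top h1
      rwa [ENNReal.toReal_ofReal hs.1] at this
    by_contra hsu
    push_neg at hsu
    exact absurd hs.2 (not_lt.mpr (hsub ⟨hds, hsu⟩).le)
  have hle : ENNReal.ofReal u ≤ passage X y ω := by
    refine le_sInf fun a ha => ?_
    obtain ⟨s, hs, rfl⟩ := ha
    exact ENNReal.ofReal_le_ofReal (hub s hs)
  rw [← hofd] at hle
  have := (ENNReal.ofReal_le_ofReal_iff (by positivity : (0:ℝ) ≤ d)).mp hle
  linarith

/-- The truncated stopping time `τ ∧ τ_n`. -/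
noncomputable def sigmaN (X : ℝ → Ω → ℝ) (τ : Ω → ℝ) (n : ℕ) (ω : Ω) : ℝ :=
  (min (ENNReal.ofReal (τ ω)) (passage X n ω)).toReal

lemma sigmaN_nonneg (X : ℝ → Ω → ℝ) (τ : Ω → ℝ) (n : ℕ) (ω : Ω) : 0 ≤ sigmaN X τ n ω :=
  ENNReal.toReal_nonneg

lemma sigmaN_min_ne_top (X : ℝ → Ω → ℝ) (τ : Ω → ℝ) (n : ℕ) (ω : Ω) :
    min (ENNReal.ofReal (τ ω)) (passage X n ω) ≠ ⊤ :=
  (lt_of_le_of_lt (min_le_left _ _) ENNReal.ofReal_lt_top).ne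

lemma ofReal_sigmaN (X : ℝ → Ω → ℝ) (τ : Ω → ℝ) (n : ℕ) (ω : Ω) :
    ENNReal.ofReal (sigmaN X τ n ω) = min (ENNReal.ofReal (τ ω)) (passage X n ω) :=
  ENNReal.ofReal_toReal (sigmaN_min_ne_top X τ n ω)

lemma sigmaN_le (X : ℝ → Ω → ℝ) (τ : Ω → ℝ) (n : ℕ) (ω : Ω) (hτ0 : 0 ≤ τ ω) :
    sigmaN X τ n ω ≤ τ ω := by
  have := ENNReal.toReal_mono ENNReal.ofReal_ne_top
    (min_le_left (ENNReal.ofReal (τ ω)) (passage X n ω))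
  rwa [ENNReal.toReal_ofReal hτ0] at this

lemma sigmaN_eq_of_lt (X : ℝ → Ω → ℝ) (τ : Ω → ℝ) (n : ℕ) (ω : Ω) (hτ0 : 0 ≤ τ ω)
    (hcase : ¬ passage X (n:ℝ) ω ≤ ENNReal.ofReal (τ ω)) : sigmaN X τ n ω = τ ω := by
  rw [sigmaN, min_eq_left (le_of_not_ge hcase), ENNReal.toReal_ofReal hτ0]

lemma sigmaN_eq_passage (X : ℝ → Ω → ℝ) (τ : Ω → ℝ) (n : ℕ) (ω : Ω)
    (hcase : passage X (n:ℝ) ω ≤ ENNReal.ofReal (τ ω)) :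
    sigmaN X τ n ω = (passage X (n:ℝ) ω).toReal := by
  rw [sigmaN, min_eq_right hcase]

lemma sigmaN_upper (X : ℝ → Ω → ℝ) (τ : Ω → ℝ) (n : ℕ) (ω : Ω) :
    ∀ t : ℝ, 0 ≤ t → t < sigmaN X τ n ω → X t ω < (n:ℝ) + 1 := by
  intro t ht htlt
  have h1 : ENNReal.ofReal t < ENNReal.ofReal (sigmaN X τ n ω) :=
    (ENNReal.ofReal_lt_ofReal_iff_of_nonneg ht).mpr htlt
  rw [ofReal_sigmaN] at h1
  have h2 : ENNReal.ofReal t < passage X (n:ℝ) ω := lt_of_lt_of_le h1 (min_le_right _ _)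
  by_contra hcon
  push_neg at hcon
  have : passage X (n:ℝ) ω ≤ ENNReal.ofReal t :=
    sInf_le ⟨t, ⟨ht, by linarith⟩, rfl⟩
  exact absurd h2 (not_lt.mpr this)

lemma sigmaN_isStoppingTime (ℱ : Filtration ℝ m) (X : ℝ → Ω → ℝ) (hadapt : Adapted ℱ X)
    (hrc : ∀ ω, ∀ t : ℝ, ContinuousWithinAt (fun s => X s ω) (Set.Ici t) t)
    (hrightF : ∀ t : ℝ, (ℱ t : MeasurableSpace Ω) = ⨅ s ∈ Set.Ioi t, (ℱ s : MeasurableSpace Ω))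
    (τ : Ω → ℝ) (hτ : IsStoppingTime ℱ (fun ω => (τ ω : WithTop ℝ))) (hτ0 : ∀ ω, 0 ≤ τ ω) (n : ℕ) :
    IsStoppingTime ℱ (fun ω => (sigmaN X τ n ω : WithTop ℝ)) := by
  intro t
  simp only [WithTop.coe_le_coe]
  have hτ' : ∀ t : ℝ, MeasurableSet[ℱ t] {ω | τ ω ≤ t} := fun t => by
    simpa only [WithTop.coe_le_coe] using hτ t
  by_cases ht : 0 ≤ t
  · have hset : {ω | sigmaN X τ n ω ≤ t}
        = {ω | τ ω ≤ t} ∪ {ω | passage X (n:ℝ) ω ≤ ENNReal.ofReal t} := by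
      ext ω
      simp only [Set.mem_setOf_eq, Set.mem_union]
      constructor
      · intro hle
        have h1 : ENNReal.ofReal (sigmaN X τ n ω) ≤ ENNReal.ofReal t :=
          ENNReal.ofReal_le_ofReal hle
        rw [ofReal_sigmaN, min_le_iff] at h1
        rcases h1 with h1 | h1
        · exact Or.inl ((ENNReal.ofReal_le_ofReal_iff ht).mp h1)
        · exact Or.inr h1
      · intro hle
        have h1 : min (ENNReal.ofReal (τ ω)) (passage X (n:ℝ) ω) ≤ ENNReal.ofReal t := by
          rcases hle with h1 | h1
          · exact le_trans (min_le_left _ _) (ENNReal.ofReal_le_ofReal h1)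
          · exact le_trans (min_le_right _ _) h1
        have := ENNReal.toReal_mono ENNReal.ofReal_ne_top h1
        rwa [ENNReal.toReal_ofReal ht] at this
    rw [hset]
    exact (hτ' t).union (aux_passage_le_mem ℱ X hadapt hrc hrightF (n:ℝ) t ht)
  · have hset : {ω | sigmaN X τ n ω ≤ t} = ∅ := by
      ext ω
      simp only [Set.mem_setOf_eq, Set.mem_empty_iff_false, iff_false, not_le]
      exact lt_of_lt_of_le (lt_of_not_ge ht) (sigmaN_nonneg X τ n ω)
    rw [hset]
    exact @MeasurableSet.empty _ (ℱ t)

lemma stoppingTime_measurable (ℱ : Filtration ℝ m) (τ : Ω → ℝ) (hτ : IsStoppingTime ℱ (fun ω => (τ ω : WithTop ℝ))) :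
    Measurable τ := by
  apply measurable_of_Iic
  intro t
  have h' : MeasurableSet[ℱ t] {ω | τ ω ≤ t} := by simpa only [WithTop.coe_le_coe] using hτ t
  exact ℱ.le t _ h'

lemma sigmaN_measurable (ℱ : Filtration ℝ m) (X : ℝ → Ω → ℝ) (hadapt : Adapted ℱ X)
    (hrc : ∀ ω, ∀ t : ℝ, ContinuousWithinAt (fun s => X s ω) (Set.Ici t) t)
    (hrightF : ∀ t : ℝ, (ℱ t : MeasurableSpace Ω) = ⨅ s ∈ Set.Ioi t, (ℱ s : MeasurableSpace Ω))
    (τ : Ω → ℝ) (hτ : Measurable τ) (n : ℕ) : Measurable (sigmaN X τ n) :=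
  ((hτ.ennreal_ofReal.min (aux_passage_measurable ℱ X hadapt hrc hrightF (n:ℝ)))).ennreal_toReal

lemma cost_measurable (X : ℝ → Ω → ℝ) (h : ℝ → ℝ) (hhc : Continuous h)
    (hXj : Measurable fun p : ℝ × Ω => X p.1 p.2)
    (ρ : Ω → ℝ) (hρ : Measurable ρ) :
    Measurable fun ω => costC X h ρ ω := by
  classical
  have heq : (fun ω => costC X h ρ ω)
      = fun ω => ∫⁻ s, (if s ∈ Set.Ioc (0:ℝ) (ρ ω) then ENNReal.ofReal (h (X s ω)) else 0) := by
    funext ω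
    rw [costC, ← lintegral_indicator measurableSet_Ioc]
    congr 1
    funext s
    rw [Set.indicator_apply]
  rw [heq]
  have hcond : MeasurableSet {p : Ω × ℝ | p.2 ∈ Set.Ioc (0:ℝ) (ρ p.1)} := by
    have h1 : MeasurableSet {p : Ω × ℝ | (0:ℝ) < p.2} :=
      measurableSet_lt measurable_const measurable_snd
    have h2 : MeasurableSet {p : Ω × ℝ | p.2 ≤ ρ p.1} :=
      measurableSet_le measurable_snd (hρ.comp measurable_fst)
    exact h1.inter h2
  have hfun : Measurable fun p : Ω × ℝ => ENNReal.ofReal (h (X p.2 p.1)) :=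
    ((hhc.measurable.comp (hXj.comp (measurable_snd.prodMk measurable_fst)))).ennreal_ofReal
  exact Measurable.lintegral_prod_right' (Measurable.ite hcond hfun measurable_const)

lemma stopped_measurable (X : ℝ → Ω → ℝ) (γ : ℝ → ℝ) (hγ : Monotone γ)
    (hXj : Measurable fun p : ℝ × Ω => X p.1 p.2)
    (ρ : Ω → ℝ) (hρ : Measurable ρ) :
    Measurable fun ω => γ (X (ρ ω) ω) :=
  hγ.measurable.comp (hXj.comp (hρ.prodMk measurable_id))

lemma payoff_measurable (X : ℝ → Ω → ℝ) (γ h : ℝ → ℝ) (hγ : Monotone γ) (hhc : Continuous h)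
    (hXj : Measurable fun p : ℝ × Ω => X p.1 p.2)
    (ρ : Ω → ℝ) (hρ : Measurable ρ) :
    Measurable (payoffC X γ h ρ) :=
  (stopped_measurable X γ hγ hXj ρ hρ).sub
    (cost_measurable X h hhc hXj ρ hρ).ennreal_toReal

lemma hXσge (X : ℝ → Ω → ℝ)
    (hrc : ∀ ω, ∀ t : ℝ, ContinuousWithinAt (fun s => X s ω) (Set.Ici t) t)
    (τ : Ω → ℝ) (n : ℕ) (ω : Ω)
    (hcase : passage X (n:ℝ) ω ≤ ENNReal.ofReal (τ ω)) :
    (n:ℝ) ≤ X (sigmaN X τ n ω) ω := by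
  have hfin : passage X (n:ℝ) ω ≠ ⊤ := (lt_of_le_of_lt hcase ENNReal.ofReal_lt_top).ne
  rw [sigmaN_eq_passage X τ n ω hcase]
  exact aux_le_X_passage X hrc _ ω hfin

lemma stopped_integrable (μ : Measure Ω) (X : ℝ → Ω → ℝ) (γ : ℝ → ℝ) (hγ : Monotone γ)
    (hXj : Measurable fun p : ℝ × Ω => X p.1 p.2)
    (τ ρ : Ω → ℝ) (hρ : Measurable ρ) (hρ0 : ∀ ω, 0 ≤ ρ ω) (hρle : ∀ ω, ρ ω ≤ τ ω)
    (hsup : (∫⁻ ω, ⨆ t ∈ Set.Icc (0 : ℝ) (τ ω), ENNReal.ofReal |γ (X t ω)| ∂μ) < ⊤) :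
    Integrable (fun ω => γ (X (ρ ω) ω)) μ := by
  refine ⟨(stopped_measurable X γ hγ hXj ρ hρ).aestronglyMeasurable, ?_⟩
  rw [hasFiniteIntegral_def]
  refine lt_of_le_of_lt (lintegral_mono fun ω => ?_) hsup
  rw [Real.enorm_eq_ofReal_abs]
  exact le_biSup (fun t => ENNReal.ofReal |γ (X t ω)|) ⟨hρ0 ω, hρle ω⟩

lemma cost_integrable (μ : Measure Ω) (X : ℝ → Ω → ℝ) (h : ℝ → ℝ) (hhc : Continuous h)
    (hXj : Measurable fun p : ℝ × Ω => X p.1 p.2)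
    (ρ : Ω → ℝ) (hρ : Measurable ρ)
    (hcost : (∫⁻ ω, costC X h ρ ω ∂μ) < ⊤) :
    Integrable (fun ω => (costC X h ρ ω).toReal) μ :=
  integrable_toReal_of_lintegral_ne_top
    (cost_measurable X h hhc hXj ρ hρ).aemeasurable hcost.ne

lemma payoff_integrable (μ : Measure Ω) (X : ℝ → Ω → ℝ) (γ h : ℝ → ℝ)
    (hγ : Monotone γ) (hhc : Continuous h)
    (hXj : Measurable fun p : ℝ × Ω => X p.1 p.2)
    (τ ρ : Ω → ℝ) (hρ : Measurable ρ) (hρ0 : ∀ ω, 0 ≤ ρ ω) (hρle : ∀ ω, ρ ω ≤ τ ω)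
    (hcost : (∫⁻ ω, costC X h ρ ω ∂μ) < ⊤)
    (hsup : (∫⁻ ω, ⨆ t ∈ Set.Icc (0 : ℝ) (τ ω), ENNReal.ofReal |γ (X t ω)| ∂μ) < ⊤) :
    Integrable (payoffC X γ h ρ) μ :=
  (stopped_integrable μ X γ hγ hXj τ ρ hρ hρ0 hρle hsup).sub
    (cost_integrable μ X h hhc hXj ρ hρ hcost)

end Aux


/-- Lemma 3.4: the supremum of the expected pay-off over all admissible
stopping times equals the supremum over the upper regular ones. -/
theorem sup_over_upper_regular {Ω : Type*}
    [m : MeasurableSpace Ω] (μ : Measure Ω) [IsProbabilityMeasure μ]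
    (ℱ : Filtration ℝ m) (X : ℝ → Ω → ℝ)
    (hadapt : Adapted ℱ X)
    (hrc : ∀ ω, ∀ t : ℝ, ContinuousWithinAt (fun s => X s ω) (Set.Ici t) t)
    (hrightF : ∀ t : ℝ, (ℱ t : MeasurableSpace Ω) = ⨅ s ∈ Set.Ioi t, (ℱ s : MeasurableSpace Ω))
    (hcompl : ∀ s : Set Ω, μ s = 0 → MeasurableSet[ℱ 0] s)
    (x : ℝ) (hX0 : ∀ᵐ ω ∂μ, X 0 ω = x)
    (γ h : ℝ → ℝ) (hγ : Monotone γ) (hh0 : ∀ z : ℝ, 0 ≤ h z) (hhc : Continuous h) :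
    (⨆ τ ∈ Tset μ ℱ X γ h, ((J μ X γ h τ : ℝ) : EReal))
      = ⨆ τ ∈ {τ ∈ Tset μ ℱ X γ h | UpperRegular μ X τ}, ((J μ X γ h τ : ℝ) : EReal) := by
  classical
  apply le_antisymm
  swap
  · exact biSup_mono fun ρ hρ => hρ.1
  refine iSup₂_le fun τ hτm => ?_
  obtain ⟨hst, hτ0, hτint, hcostlt, hsuplt⟩ := hτm
  have hXm : ∀ t, Measurable (X t) := fun t => (Measurable.mono (hadapt t) (ℱ.le t) le_rfl)
  have hXj : Measurable fun p : ℝ × Ω => X p.1 p.2 := aux_jointMeas X hXm hrc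
  have hτmeas : Measurable τ := stoppingTime_measurable ℱ τ hst
  have hσmeas : ∀ n : ℕ, Measurable (sigmaN X τ n) :=
    fun n => sigmaN_measurable ℱ X hadapt hrc hrightF τ hτmeas n
  have hσle : ∀ (n : ℕ) ω, sigmaN X τ n ω ≤ τ ω := fun n ω => sigmaN_le X τ n ω (hτ0 ω)
  have hcostmono : ∀ (n : ℕ) ω, costC X h (sigmaN X τ n) ω ≤ costC X h τ ω := by
    intro n ω
    exact lintegral_mono_set (Set.Ioc_subset_Ioc_right (hσle n ω))
  have hcostσlt : ∀ n : ℕ, (∫⁻ ω, costC X h (sigmaN X τ n) ω ∂μ) < ⊤ :=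
    fun n => lt_of_le_of_lt (lintegral_mono (hcostmono n)) hcostlt
  have hσT : ∀ n : ℕ, sigmaN X τ n ∈ Tset μ ℱ X γ h := by
    intro n
    refine ⟨sigmaN_isStoppingTime ℱ X hadapt hrc hrightF τ hst hτ0 n,
      fun ω => sigmaN_nonneg X τ n ω, ?_, hcostσlt n, ?_⟩
    · refine hτint.mono (hσmeas n).aestronglyMeasurable (ae_of_all _ fun ω => ?_)
      rw [Real.norm_eq_abs, Real.norm_eq_abs, abs_of_nonneg (sigmaN_nonneg X τ n ω),
        abs_of_nonneg (hτ0 ω)]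
      exact hσle n ω
    · refine lt_of_le_of_lt (lintegral_mono fun ω => ?_) hsuplt
      exact biSup_mono fun t ht => ⟨ht.1, ht.2.trans (hσle n ω)⟩
  have hσU : ∀ n : ℕ, UpperRegular μ X (sigmaN X τ n) :=
    fun n => ⟨(n:ℝ) + 1, ae_of_all _ fun ω => sigmaN_upper X τ n ω⟩
  -- integrability
  have hpayτ : Integrable (payoffC X γ h τ) μ :=
    payoff_integrable μ X γ h hγ hhc hXj τ τ hτmeas hτ0 (fun ω => le_rfl) hcostlt hsuplt
  have hpayσ : ∀ n : ℕ, Integrable (payoffC X γ h (sigmaN X τ n)) μ := fun n =>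
    payoff_integrable μ X γ h hγ hhc hXj τ (sigmaN X τ n) (hσmeas n)
      (fun ω => sigmaN_nonneg X τ n ω) (hσle n) (hcostσlt n) hsuplt
  have hcostτint : Integrable (fun ω => (costC X h τ ω).toReal) μ :=
    cost_integrable μ X h hhc hXj τ hτmeas hcostlt
  have hae : ∀ᵐ ω ∂μ, costC X h τ ω ≠ ⊤ := by
    filter_upwards [ae_lt_top (cost_measurable X h hhc hXj τ hτmeas) hcostlt.ne] with ω hω
    exact hω.ne
  -- key pointwise inequality
  have hkey : ∀ ω, costC X h τ ω ≠ ⊤ → ∀ n : ℕ, X (τ ω) ω ≤ (n:ℝ) →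
      payoffC X γ h τ ω ≤ payoffC X γ h (sigmaN X τ n) ω := by
    intro ω hω n hn
    by_cases hcase : passage X (n:ℝ) ω ≤ ENNReal.ofReal (τ ω)
    · have h1 : γ (X (τ ω) ω) ≤ γ (X (sigmaN X τ n ω) ω) :=
        hγ (hn.trans (hXσge X hrc τ n ω hcase))
      have h2 : (costC X h (sigmaN X τ n) ω).toReal ≤ (costC X h τ ω).toReal :=
        ENNReal.toReal_mono hω (hcostmono n ω)
      simp only [payoffC]
      linarith
    · have hσeq := sigmaN_eq_of_lt X τ n ω (hτ0 ω) hcase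
      simp only [payoffC, costC, hσeq, le_refl]
  -- dominated convergence setup
  set g : ℕ → Ω → ℝ :=
    fun n ω => min (payoffC X γ h τ ω) (payoffC X γ h (sigmaN X τ n) ω) with hg
  set bound : Ω → ℝ :=
    fun ω => |payoffC X γ h τ ω| + |γ 0| + (costC X h τ ω).toReal with hbound
  have hboundint : Integrable bound μ :=
    (hpayτ.abs.add (integrable_const _)).add hcostτint
  have hgmeas : ∀ n : ℕ, AEStronglyMeasurable (g n) μ := fun n =>
    ((payoff_measurable X γ h hγ hhc hXj τ hτmeas).min
      (payoff_measurable X γ h hγ hhc hXj (sigmaN X τ n) (hσmeas n))).aestronglyMeasurable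
  have hdom : ∀ n : ℕ, ∀ᵐ ω ∂μ, ‖g n ω‖ ≤ bound ω := by
    intro n
    filter_upwards [hae] with ω hω
    rw [Real.norm_eq_abs, abs_le]
    have habs1 : (0:ℝ) ≤ |payoffC X γ h τ ω| := abs_nonneg _
    have habs2 : (0:ℝ) ≤ |γ 0| := abs_nonneg _
    have hct : (0:ℝ) ≤ (costC X h τ ω).toReal := ENNReal.toReal_nonneg
    constructor
    · refine le_min ?_ ?_
      · simp only [hbound]
        have := neg_abs_le (payoffC X γ h τ ω)
        linarith
      · by_cases hcase : passage X (n:ℝ) ω ≤ ENNReal.ofReal (τ ω)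
        · have h1 : γ 0 ≤ γ (X (sigmaN X τ n ω) ω) :=
            hγ ((Nat.cast_nonneg n).trans (hXσge X hrc τ n ω hcase))
          have h2 : (costC X h (sigmaN X τ n) ω).toReal ≤ (costC X h τ ω).toReal :=
            ENNReal.toReal_mono hω (hcostmono n ω)
          have h3 := neg_abs_le (γ 0)
          have h4 : (0:ℝ) ≤ (costC X h (sigmaN X τ n) ω).toReal := ENNReal.toReal_nonneg
          simp only [hbound, payoffC]
          have habs1' : (0:ℝ) ≤ |γ (X (τ ω) ω) - (costC X h τ ω).toReal| := abs_nonneg _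
          linarith
        · have hσeq := sigmaN_eq_of_lt X τ n ω (hτ0 ω) hcase
          have : payoffC X γ h (sigmaN X τ n) ω = payoffC X γ h τ ω := by
            simp only [payoffC, costC, hσeq]
          rw [this]
          simp only [hbound]
          have := neg_abs_le (payoffC X γ h τ ω)
          linarith
    · refine (min_le_left _ _).trans ?_
      simp only [hbound]
      have := le_abs_self (payoffC X γ h τ ω)
      linarith
  have htend : ∀ᵐ ω ∂μ, Tendsto (fun n => g n ω) atTop (𝓝 (payoffC X γ h τ ω)) := by
    filter_upwards [hae] with ω hω
    refine tendsto_const_nhds.congr' ?_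
    filter_upwards [eventually_ge_atTop ⌈X (τ ω) ω⌉₊] with n hn
    have hXle : X (τ ω) ω ≤ (n:ℝ) := (Nat.le_ceil _).trans (Nat.cast_le.mpr hn)
    exact (min_eq_left (hkey ω hω n hXle)).symm
  have hgint : ∀ n : ℕ, Integrable (g n) μ := fun n =>
    Integrable.mono' hboundint (hgmeas n) (hdom n)
  have hDCT : Tendsto (fun n => ∫ ω, g n ω ∂μ) atTop (𝓝 (J μ X γ h τ)) :=
    tendsto_integral_of_dominated_convergence bound hgmeas hboundint hdom htend
  have hlim : Tendsto (fun n => ((∫ ω, g n ω ∂μ : ℝ) : EReal)) atTop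
      (𝓝 ((J μ X γ h τ : ℝ) : EReal)) :=
    (continuous_coe_real_ereal.tendsto _).comp hDCT
  refine le_of_tendsto hlim (Eventually.of_forall fun n => ?_)
  have hle1 : (∫ ω, g n ω ∂μ) ≤ J μ X γ h (sigmaN X τ n) :=
    integral_mono_ae (hgint n) (hpayσ n) (ae_of_all _ fun ω => min_le_right _ _)
  refine le_trans (EReal.coe_le_coe_iff.mpr hle1) ?_
  exact le_biSup (fun ρ => ((J μ X γ h ρ : ℝ) : EReal)) ⟨hσT n, hσU n⟩


end StmtC

end
end

section
/- Let f : ℝ → ℝ satisfy f > 0 on (−∞, x̄), f(x̄) = 0 and f < 0 on (x̄, ∞) for some x̄ ∈ ℝ, let m : [0, ∞) → ℝ be nondecreasing with s ↦ f(m(s)) locally Lebesgue integrable, and for a ∈ ℝ set T_a := inf{s ≥ 0 : m(s) > a} ∈ [0, ∞]. Then for every ȳ ∈ ℝ and every finite t with t ≤ T_ȳ, one has ∫_0^t f(m(s)) ds ≤ ∫_0^{T_{x̄ ∧ ȳ}} f(m(s)) ds (the right-hand side understood as an extended-real Lebesgue integral when T_{x̄ ∧ ȳ} = ∞). -/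
open MeasureTheory Set
open scoped ENNReal

noncomputable section

namespace Stmt11

/-- The first time the nondecreasing function `m` exceeds the level `a`:
`T_a = inf {s ≥ 0 : m(s) > a} ∈ [0, ∞]` (with `inf ∅ = ∞`). -/
noncomputable def T (m : ℝ → ℝ) (a : ℝ) : ℝ≥0∞ :=
  sInf (ENNReal.ofReal '' {s : ℝ | 0 ≤ s ∧ a < m s})

lemma le_of_lt_T (m : ℝ → ℝ) (a s : ℝ) (hs : 0 ≤ s)
    (h : ENNReal.ofReal s < T m a) : m s ≤ a := by
  by_contra hc
  push_neg at hc
  have hmem : ENNReal.ofReal s ∈ ENNReal.ofReal '' {s : ℝ | 0 ≤ s ∧ a < m s} :=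
    ⟨s, ⟨hs, hc⟩, rfl⟩
  exact absurd (sInf_le hmem) (not_le.mpr h)

lemma lt_of_T_lt {m : ℝ → ℝ} (hm : MonotoneOn m (Set.Ici (0 : ℝ))) (a s : ℝ) (hs : 0 ≤ s)
    (h : T m a < ENNReal.ofReal s) : a < m s := by
  obtain ⟨x, hx, hxs⟩ := sInf_lt_iff.mp h
  obtain ⟨s', ⟨hs'0, ha⟩, rfl⟩ := hx
  have hspos : 0 < s := ENNReal.ofReal_pos.mp (pos_of_gt hxs)
  have hs' : s' < s := by
    rwa [ENNReal.ofReal_lt_ofReal_iff hspos] at hxs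
  exact lt_of_lt_of_le ha (hm hs'0 hs hs'.le)

/-- if `f > 0` on `(-∞, x̄)`, `f(x̄) = 0`, `f < 0` on `(x̄, ∞)`, and `m` is
nondecreasing on `[0, ∞)` with `s ↦ f(m(s))` locally integrable, then for every `ȳ` and every
finite `t ≤ T_ȳ`, `∫_0^t f(m(s)) ds ≤ ∫_0^{T_{x̄ ∧ ȳ}} f(m(s)) ds`, the right-hand side
understood as an extended-real Lebesgue integral (the integrand is nonnegative there). -/
theorem integral_le_integral_up_to_root
    (f : ℝ → ℝ) (xbar : ℝ)
    (hpos : ∀ z : ℝ, z < xbar → 0 < f z)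
    (hzero : f xbar = 0)
    (hneg : ∀ z : ℝ, xbar < z → f z < 0)
    (m : ℝ → ℝ) (hm : MonotoneOn m (Set.Ici (0 : ℝ)))
    (hloc : LocallyIntegrableOn (fun s => f (m s)) (Set.Ici (0 : ℝ)) volume)
    (ybar t : ℝ) (ht0 : 0 ≤ t) (ht : ENNReal.ofReal t ≤ T m ybar) :
    ((∫ s in Set.Ioc (0 : ℝ) t, f (m s) : ℝ) : EReal)
      ≤ ((∫⁻ s in {s : ℝ | 0 ≤ s ∧ ENNReal.ofReal s < T m (min xbar ybar)},
          ENNReal.ofReal (f (m s)) : ℝ≥0∞) : EReal) := by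
  classical
  set g : ℝ → ℝ := fun s => f (m s) with hg
  set Tm : ℝ≥0∞ := T m (min xbar ybar) with hTm
  set S : Set ℝ := {s : ℝ | 0 ≤ s ∧ ENNReal.ofReal s < Tm} with hS
  set t' : ℝ := if Tm = ⊤ then t else min t Tm.toReal with ht'
  have h1 : 0 ≤ t' := by
    rw [ht']; split
    · exact ht0
    · exact le_min ht0 ENNReal.toReal_nonneg
  have h2 : t' ≤ t := by
    rw [ht']; split
    · exact le_rfl
    · exact min_le_left _ _
  -- for 0 < s < t', we have ofReal s < Tm
  have h3 : ∀ s : ℝ, 0 < s → s < t' → ENNReal.ofReal s < Tm := by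
    intro s hs0 hst'
    rw [ht'] at hst'
    by_cases htop : Tm = ⊤
    · rw [htop]; exact ENNReal.ofReal_lt_top
    · rw [if_neg htop] at hst'
      have hst : s < Tm.toReal := lt_of_lt_of_le hst' (min_le_right _ _)
      calc ENNReal.ofReal s < ENNReal.ofReal Tm.toReal :=
            (ENNReal.ofReal_lt_ofReal_iff_of_nonneg hs0.le).mpr hst
        _ = Tm := ENNReal.ofReal_toReal htop
  -- for t' < s < t, the integrand is nonpositive
  have h4 : ∀ s : ℝ, t' < s → s < t → g s ≤ 0 := by
    intro s hs1 hs2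
    have hs0 : 0 ≤ s := le_trans h1 hs1.le
    by_cases htop : Tm = ⊤
    · rw [ht', if_pos htop] at hs1
      exact absurd hs1 (not_lt.mpr hs2.le)
    · have hTt : Tm < ENNReal.ofReal s := by
        rw [ht', if_neg htop] at hs1
        have : Tm.toReal < s := by
          by_contra hc
          push_neg at hc
          exact absurd (le_min hs2.le hc) (not_le.mpr hs1)
        calc Tm = ENNReal.ofReal Tm.toReal := (ENNReal.ofReal_toReal htop).symm
          _ < ENNReal.ofReal s :=
            (ENNReal.ofReal_lt_ofReal_iff_of_nonneg ENNReal.toReal_nonneg).mpr this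
      have hmin : min xbar ybar < m s := lt_of_T_lt hm _ s hs0 hTt
      have hyt : ENNReal.ofReal s < T m ybar :=
        lt_of_lt_of_le ((ENNReal.ofReal_lt_ofReal_iff_of_nonneg hs0).mpr hs2) ht
      have hy : m s ≤ ybar := le_of_lt_T m ybar s hs0 hyt
      have hx : xbar < m s := by
        by_contra hc
        push_neg at hc
        exact absurd (le_min hc hy) (not_le.mpr hmin)
      exact (hneg _ hx).le
  -- nonnegativity on Ioo 0 t'
  have h5 : ∀ s : ℝ, s ∈ Set.Ioo (0 : ℝ) t' → 0 ≤ g s := by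
    intro s hs
    have hmx : m s ≤ xbar :=
      le_trans (le_of_lt_T m _ s hs.1.le (h3 s hs.1 hs.2)) (min_le_left _ _)
    rcases hmx.lt_or_eq with h | h
    · exact (hpos _ h).le
    · simp only [hg, h, hzero, le_refl]
  have h5' : ∀ s : ℝ, s ∈ Set.Ioo (0 : ℝ) t' → s ∈ S := by
    intro s hs
    exact ⟨hs.1.le, h3 s hs.1 hs.2⟩
  -- integrability
  have hI : IntegrableOn g (Set.Icc 0 t) volume :=
    hloc.integrableOn_compact_subset (fun x hx => hx.1) isCompact_Icc
  have hI1 : IntegrableOn g (Set.Ioc 0 t') volume :=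
    hI.mono_set (fun x hx => ⟨hx.1.le, le_trans hx.2 h2⟩)
  have hI2 : IntegrableOn g (Set.Ioc t' t) volume :=
    hI.mono_set (fun x hx => ⟨le_trans h1 hx.1.le, hx.2⟩)
  -- step 1 : real integral comparison
  have hsplit : ∫ s in Set.Ioc (0 : ℝ) t, g s =
      (∫ s in Set.Ioc (0 : ℝ) t', g s) + ∫ s in Set.Ioc t' t, g s := by
    rw [← Set.Ioc_union_Ioc_eq_Ioc h1 h2,
      setIntegral_union (Set.Ioc_disjoint_Ioc_of_le le_rfl) measurableSet_Ioc hI1 hI2]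
  have htail : (∫ s in Set.Ioc t' t, g s) ≤ 0 := by
    rw [integral_Ioc_eq_integral_Ioo]
    exact setIntegral_nonpos measurableSet_Ioo (fun s hs => h4 s hs.1 hs.2)
  have step1 : (∫ s in Set.Ioc (0 : ℝ) t, g s) ≤ ∫ s in Set.Ioc (0 : ℝ) t', g s := by
    rw [hsplit]; linarith
  -- step 2 : equality with lintegral
  have hae : 0 ≤ᵐ[volume.restrict (Set.Ioc (0 : ℝ) t')] g := by
    rw [← Measure.restrict_congr_set MeasureTheory.Ioo_ae_eq_Ioc]
    exact (ae_restrict_iff' measurableSet_Ioo).mpr (Filter.Eventually.of_forall h5)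
  have step2 : ENNReal.ofReal (∫ s in Set.Ioc (0 : ℝ) t', g s) =
      ∫⁻ s in Set.Ioc (0 : ℝ) t', ENNReal.ofReal (g s) := by
    exact MeasureTheory.ofReal_integral_eq_lintegral_ofReal hI1 hae
  -- step 3 : lintegral comparison
  have step3 : (∫⁻ s in Set.Ioc (0 : ℝ) t', ENNReal.ofReal (g s)) ≤
      ∫⁻ s in S, ENNReal.ofReal (g s) := by
    rw [← setLIntegral_congr MeasureTheory.Ioo_ae_eq_Ioc]
    exact lintegral_mono_set h5'
  have key : ENNReal.ofReal (∫ s in Set.Ioc (0 : ℝ) t, g s) ≤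
      ∫⁻ s in S, ENNReal.ofReal (g s) :=
    le_trans (le_trans (ENNReal.ofReal_le_ofReal step1) (le_of_eq step2)) step3
  calc ((∫ s in Set.Ioc (0 : ℝ) t, g s : ℝ) : EReal)
      ≤ ((ENNReal.ofReal (∫ s in Set.Ioc (0 : ℝ) t, g s) : ℝ≥0∞) : EReal) := by
        rw [EReal.coe_ennreal_ofReal]
        exact_mod_cast le_max_left _ _
    _ ≤ ((∫⁻ s in S, ENNReal.ofReal (g s) : ℝ≥0∞) : EReal) :=
        EReal.coe_ennreal_le_coe_ennreal_iff.mpr key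

end Stmt11

end
end
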